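/- arXiv:1905.05828 — 4 statements merged into one kernel-verified Lean document; each statement's English description precedes it below -/
import Mathlib

section
/- Under the stability setup, the semi-dual suboptimality gap is equivalent, up to constants depending only on M, to the squared L²(P)-distance between gradients: (1/(8M)) · ∫ ‖∇f(x) − ∇f₀(x)‖₂² dP(x) ≤ S(f) − S(f₀) ≤ 2M · ∫ ‖∇f(x) − ∇f₀(x)‖₂² dP(x). -/
open MeasureTheory Set RealInnerProductSpace

/-- The convex conjugate of `g` relative to the compact set `Ωt`:
`g*(y) = sup_{x ∈ Ωt} (⟨x, y⟩ − g(x))`. -/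
noncomputable def conjOn (d : ℕ) (Ωt : Set (EuclideanSpace ℝ (Fin d)))
    (g : EuclideanSpace ℝ (Fin d) → ℝ) (y : EuclideanSpace ℝ (Fin d)) : ℝ :=
  sSup ((fun x => ⟪x, y⟫ - g x) '' Ωt)

/-- The semi-dual objective `S(g) = ∫ g dP + ∫ g* dQ`. -/
noncomputable def semiDual (d : ℕ) (Ωt : Set (EuclideanSpace ℝ (Fin d)))
    (P Q : Measure (EuclideanSpace ℝ (Fin d))) (g : EuclideanSpace ℝ (Fin d) → ℝ) : ℝ :=
  ∫ x, g x ∂P + ∫ y, conjOn d Ωt g y ∂Q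


section Aux
variable {E : Type*} [NormedAddCommGroup E] [InnerProductSpace ℝ E] [CompleteSpace E]

lemma grad_eq (φ : E → ℝ) (w : E) :
    gradient φ w = (InnerProductSpace.toDual ℝ E).symm (fderiv ℝ φ w) := rfl

lemma inner_grad_eq (φ : E → ℝ) (w v : E) : ⟪gradient φ w, v⟫ = fderiv ℝ φ w v := by
  rw [grad_eq]; exact InnerProductSpace.toDual_symm_apply

lemma grad_contDiffAt {V : Set E} (hV : IsOpen V) {φ : E → ℝ} (hφ : ContDiffOn ℝ 2 φ V)
    {w : E} (hw : w ∈ V) : ContDiffAt ℝ 1 (gradient φ) w := by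
  have hat : ContDiffAt ℝ 2 φ w := hφ.contDiffAt (hV.mem_nhds hw)
  have h2 : ContDiffAt ℝ 1 (fderiv ℝ φ) w := hat.fderiv_right (by norm_num)
  exact ((InnerProductSpace.toDual ℝ E).symm.contDiff.contDiffAt).comp w h2

omit [CompleteSpace E] in
lemma gamma_deriv (x v : E) (t : ℝ) : HasDerivAt (fun t : ℝ => x + t • v) v t := by
  simpa using ((hasDerivAt_id t).smul_const v).const_add x

lemma taylor_upper {V s : Set E} (hV : IsOpen V) (hsV : s ⊆ V) (hconv : Convex ℝ s)
    {φ : E → ℝ} (hφ : ContDiffOn ℝ 2 φ V) {L : ℝ}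
    (hL : ∀ w ∈ s, ∀ v : E, ⟪fderiv ℝ (gradient φ) w v, v⟫ ≤ L * ‖v‖ ^ 2)
    {x z : E} (hx : x ∈ s) (hz : z ∈ s) :
    φ z ≤ φ x + ⟪gradient φ x, z - x⟫ + L / 2 * ‖z - x‖ ^ 2 := by
  set v := z - x with hv
  set γ : ℝ → E := fun t => x + t • v with hγ
  have hγ0 : γ 0 = x := by simp [hγ]
  have hγ1 : γ 1 = z := by simp [hγ, hv]
  have hγmem : ∀ t ∈ Icc (0:ℝ) 1, γ t ∈ s := fun t ht => hconv.add_smul_sub_mem hx hz ht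
  have hψ : ∀ t ∈ Icc (0:ℝ) 1,
      HasDerivAt (fun t => φ (γ t)) ⟪gradient φ (γ t), v⟫ t := by
    intro t ht
    have hwV : γ t ∈ V := hsV (hγmem t ht)
    have hdiff : DifferentiableAt ℝ φ (γ t) :=
      (hφ.contDiffAt (hV.mem_nhds hwV)).differentiableAt two_ne_zero
    rw [inner_grad_eq]
    exact hdiff.hasFDerivAt.comp_hasDerivAt t (gamma_deriv x v t)
  have hB : ∀ t ∈ Icc (0:ℝ) 1,
      HasDerivAt (fun t => ⟪gradient φ (γ t), v⟫) ⟪fderiv ℝ (gradient φ) (γ t) v, v⟫ t := by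
    intro t ht
    have hwV : γ t ∈ V := hsV (hγmem t ht)
    have h1 : DifferentiableAt ℝ (gradient φ) (γ t) :=
      (grad_contDiffAt hV hφ hwV).differentiableAt one_ne_zero
    have h2 : HasDerivAt (fun t => gradient φ (γ t)) (fderiv ℝ (gradient φ) (γ t) v) t :=
      h1.hasFDerivAt.comp_hasDerivAt t (gamma_deriv x v t)
    simpa using HasDerivAt.inner (𝕜 := ℝ) h2 (hasDerivAt_const t v)
  set G : ℝ → ℝ := fun t => ⟪gradient φ (γ t), v⟫ - L * t * ‖v‖ ^ 2 with hGdef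
  have hG : ∀ t ∈ Icc (0:ℝ) 1,
      HasDerivAt G (⟪fderiv ℝ (gradient φ) (γ t) v, v⟫ - L * ‖v‖ ^ 2) t := by
    intro t ht
    have h3 : HasDerivAt (fun t : ℝ => L * t * ‖v‖ ^ 2) (L * ‖v‖ ^ 2) t := by
      simpa using ((hasDerivAt_id t).const_mul L).mul_const (‖v‖ ^ 2)
    exact (hB t ht).sub h3
  have hGanti : AntitoneOn G (Icc 0 1) := by
    apply antitoneOn_of_deriv_nonpos (convex_Icc 0 1)
    · exact fun t ht => (hG t ht).continuousAt.continuousWithinAt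
    · intro t ht; rw [interior_Icc] at ht
      exact (hG t (Ioo_subset_Icc_self ht)).differentiableAt.differentiableWithinAt
    · intro t ht; rw [interior_Icc] at ht
      rw [(hG t (Ioo_subset_Icc_self ht)).deriv]
      have := hL (γ t) (hγmem t (Ioo_subset_Icc_self ht)) v
      linarith
  set F : ℝ → ℝ := fun t => φ (γ t) - t * ⟪gradient φ x, v⟫ - L / 2 * t ^ 2 * ‖v‖ ^ 2 with hFdef
  have hF : ∀ t ∈ Icc (0:ℝ) 1,
      HasDerivAt F (⟪gradient φ (γ t), v⟫ - ⟪gradient φ x, v⟫ - L * t * ‖v‖ ^ 2) t := by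
    intro t ht
    have h4 : HasDerivAt (fun t : ℝ => t * ⟪gradient φ x, v⟫) ⟪gradient φ x, v⟫ t := by
      simpa using (hasDerivAt_id t).mul_const ⟪gradient φ x, v⟫
    have h5 : HasDerivAt (fun t : ℝ => L / 2 * t ^ 2 * ‖v‖ ^ 2) (L * t * ‖v‖ ^ 2) t := by
      have := ((hasDerivAt_pow 2 t).const_mul (L / 2)).mul_const (‖v‖ ^ 2)
      exact this.congr_deriv (by ring)
    exact ((hψ t ht).sub h4).sub h5
  have hFanti : AntitoneOn F (Icc 0 1) := by
    apply antitoneOn_of_deriv_nonpos (convex_Icc 0 1)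
    · exact fun t ht => (hF t ht).continuousAt.continuousWithinAt
    · intro t ht; rw [interior_Icc] at ht
      exact (hF t (Ioo_subset_Icc_self ht)).differentiableAt.differentiableWithinAt
    · intro t ht; rw [interior_Icc] at ht
      rw [(hF t (Ioo_subset_Icc_self ht)).deriv]
      have h6 : G t ≤ G 0 :=
        hGanti (left_mem_Icc.2 zero_le_one) (Ioo_subset_Icc_self ht) ht.1.le
      simp only [hGdef, hγ0, mul_zero, zero_mul, sub_zero] at h6
      linarith
  have h7 : F 1 ≤ F 0 := hFanti (left_mem_Icc.2 zero_le_one)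
    (right_mem_Icc.2 zero_le_one) zero_le_one
  simp only [hFdef, hγ0, hγ1, one_pow, mul_one, one_mul, zero_pow, mul_zero, zero_mul,
    sub_zero] at h7
  linarith

lemma taylor_lower {V s : Set E} (hV : IsOpen V) (hsV : s ⊆ V) (hconv : Convex ℝ s)
    {φ : E → ℝ} (hφ : ContDiffOn ℝ 2 φ V) {μ : ℝ}
    (hμ : ∀ w ∈ s, ∀ v : E, μ * ‖v‖ ^ 2 ≤ ⟪fderiv ℝ (gradient φ) w v, v⟫)
    {x z : E} (hx : x ∈ s) (hz : z ∈ s) :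
    φ x + ⟪gradient φ x, z - x⟫ + μ / 2 * ‖z - x‖ ^ 2 ≤ φ z := by
  set v := z - x with hv
  set γ : ℝ → E := fun t => x + t • v with hγ
  have hγ0 : γ 0 = x := by simp [hγ]
  have hγ1 : γ 1 = z := by simp [hγ, hv]
  have hγmem : ∀ t ∈ Icc (0:ℝ) 1, γ t ∈ s := fun t ht => hconv.add_smul_sub_mem hx hz ht
  have hψ : ∀ t ∈ Icc (0:ℝ) 1,
      HasDerivAt (fun t => φ (γ t)) ⟪gradient φ (γ t), v⟫ t := by
    intro t ht
    have hwV : γ t ∈ V := hsV (hγmem t ht)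
    have hdiff : DifferentiableAt ℝ φ (γ t) :=
      (hφ.contDiffAt (hV.mem_nhds hwV)).differentiableAt two_ne_zero
    rw [inner_grad_eq]
    exact hdiff.hasFDerivAt.comp_hasDerivAt t (gamma_deriv x v t)
  have hB : ∀ t ∈ Icc (0:ℝ) 1,
      HasDerivAt (fun t => ⟪gradient φ (γ t), v⟫) ⟪fderiv ℝ (gradient φ) (γ t) v, v⟫ t := by
    intro t ht
    have hwV : γ t ∈ V := hsV (hγmem t ht)
    have h1 : DifferentiableAt ℝ (gradient φ) (γ t) :=
      (grad_contDiffAt hV hφ hwV).differentiableAt one_ne_zero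
    have h2 : HasDerivAt (fun t => gradient φ (γ t)) (fderiv ℝ (gradient φ) (γ t) v) t :=
      h1.hasFDerivAt.comp_hasDerivAt t (gamma_deriv x v t)
    simpa using HasDerivAt.inner (𝕜 := ℝ) h2 (hasDerivAt_const t v)
  set G : ℝ → ℝ := fun t => ⟪gradient φ (γ t), v⟫ - μ * t * ‖v‖ ^ 2 with hGdef
  have hG : ∀ t ∈ Icc (0:ℝ) 1,
      HasDerivAt G (⟪fderiv ℝ (gradient φ) (γ t) v, v⟫ - μ * ‖v‖ ^ 2) t := by
    intro t ht
    have h3 : HasDerivAt (fun t : ℝ => μ * t * ‖v‖ ^ 2) (μ * ‖v‖ ^ 2) t := by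
      simpa using ((hasDerivAt_id t).const_mul μ).mul_const (‖v‖ ^ 2)
    exact (hB t ht).sub h3
  have hGmono : MonotoneOn G (Icc 0 1) := by
    apply monotoneOn_of_deriv_nonneg (convex_Icc 0 1)
    · exact fun t ht => (hG t ht).continuousAt.continuousWithinAt
    · intro t ht; rw [interior_Icc] at ht
      exact (hG t (Ioo_subset_Icc_self ht)).differentiableAt.differentiableWithinAt
    · intro t ht; rw [interior_Icc] at ht
      rw [(hG t (Ioo_subset_Icc_self ht)).deriv]
      have := hμ (γ t) (hγmem t (Ioo_subset_Icc_self ht)) v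
      linarith
  set F : ℝ → ℝ := fun t => φ (γ t) - t * ⟪gradient φ x, v⟫ - μ / 2 * t ^ 2 * ‖v‖ ^ 2 with hFdef
  have hF : ∀ t ∈ Icc (0:ℝ) 1,
      HasDerivAt F (⟪gradient φ (γ t), v⟫ - ⟪gradient φ x, v⟫ - μ * t * ‖v‖ ^ 2) t := by
    intro t ht
    have h4 : HasDerivAt (fun t : ℝ => t * ⟪gradient φ x, v⟫) ⟪gradient φ x, v⟫ t := by
      simpa using (hasDerivAt_id t).mul_const ⟪gradient φ x, v⟫
    have h5 : HasDerivAt (fun t : ℝ => μ / 2 * t ^ 2 * ‖v‖ ^ 2) (μ * t * ‖v‖ ^ 2) t := by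
      have := ((hasDerivAt_pow 2 t).const_mul (μ / 2)).mul_const (‖v‖ ^ 2)
      exact this.congr_deriv (by ring)
    exact ((hψ t ht).sub h4).sub h5
  have hFmono : MonotoneOn F (Icc 0 1) := by
    apply monotoneOn_of_deriv_nonneg (convex_Icc 0 1)
    · exact fun t ht => (hF t ht).continuousAt.continuousWithinAt
    · intro t ht; rw [interior_Icc] at ht
      exact (hF t (Ioo_subset_Icc_self ht)).differentiableAt.differentiableWithinAt
    · intro t ht; rw [interior_Icc] at ht
      rw [(hF t (Ioo_subset_Icc_self ht)).deriv]
      have h6 : G 0 ≤ G t :=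
        hGmono (left_mem_Icc.2 zero_le_one) (Ioo_subset_Icc_self ht) ht.1.le
      simp only [hGdef, hγ0, mul_zero, zero_mul, sub_zero] at h6
      linarith
  have h7 : F 0 ≤ F 1 := hFmono (left_mem_Icc.2 zero_le_one)
    (right_mem_Icc.2 zero_le_one) zero_le_one
  simp only [hFdef, hγ0, hγ1, one_pow, mul_one, one_mul, zero_pow, mul_zero, zero_mul,
    sub_zero] at h7
  linarith

lemma gradient_measurable (φ : E → ℝ) [MeasurableSpace E] [BorelSpace E]
    [SecondCountableTopology E] : Measurable (gradient φ) :=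
  ((InnerProductSpace.toDual ℝ E).symm.continuous.measurable).comp (measurable_fderiv ℝ φ)

end Aux

section ConjAux
variable {d : ℕ} {Ωt : Set (EuclideanSpace ℝ (Fin d))} {g : EuclideanSpace ℝ (Fin d) → ℝ}
  {y z : EuclideanSpace ℝ (Fin d)} {c : ℝ}

lemma conjOn_le (hne : Ωt.Nonempty) (h : ∀ z ∈ Ωt, ⟪z, y⟫ - g z ≤ c) :
    conjOn d Ωt g y ≤ c :=
  csSup_le (hne.image _) (by rintro _ ⟨w, hw, rfl⟩; exact h w hw)

lemma le_conjOn (hcomp : IsCompact Ωt) (hg : ContinuousOn g Ωt) (hz : z ∈ Ωt) :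
    ⟪z, y⟫ - g z ≤ conjOn d Ωt g y := by
  apply le_csSup
  · exact (hcomp.image_of_continuousOn
      (((continuous_id.inner continuous_const).continuousOn).sub hg)).bddAbove
  · exact mem_image_of_mem _ hz

lemma conjOn_lipschitz {M : ℝ} (hM : 0 ≤ M)
    (htball : Ωt ⊆ Metric.closedBall 0 M) (hne : Ωt.Nonempty)
    (hcomp : IsCompact Ωt) (hg : ContinuousOn g Ωt) :
    LipschitzWith M.toNNReal (conjOn d Ωt g) := by
  apply LipschitzWith.of_le_add_mul
  intro y₁ y₂
  rw [Real.coe_toNNReal M hM]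
  apply conjOn_le hne
  intro w hw
  have h1 : ⟪w, y₂⟫ - g w ≤ conjOn d Ωt g y₂ := le_conjOn hcomp hg hw
  have h2 : ⟪w, y₁⟫ - ⟪w, y₂⟫ ≤ M * dist y₁ y₂ := by
    rw [← inner_sub_right, dist_eq_norm]
    calc ⟪w, y₁ - y₂⟫ ≤ ‖w‖ * ‖y₁ - y₂‖ := real_inner_le_norm w _
      _ ≤ M * ‖y₁ - y₂‖ := by
          apply mul_le_mul_of_nonneg_right _ (norm_nonneg _)
          simpa using htball hw
  linarith

end ConjAux
lemma harith_aux (M G : ℝ) (hM : 2 ≤ M) (hG0 : 0 < G) (hG3 : G ≤ 3*M) :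
    1/(8*M) * G^2 ≤ (min (G/(2*M)) 1)*G - M * (min (G/(2*M)) 1)^2 := by
  have hM0 : (0:ℝ) < M := by linarith
  rcases le_total (G/(2*M)) 1 with hle | hle
  · rw [min_eq_left hle]
    have hrw : G/(2*M)*G - M*(G/(2*M))^2 = G^2/(4*M) := by field_simp; ring
    rw [hrw, div_mul_eq_mul_div, div_le_div_iff₀ (by positivity) (by positivity), one_mul]
    nlinarith [sq_nonneg G]
  · rw [min_eq_right hle]
    have h2M : 2*M ≤ G := by
      have := (one_le_div (by positivity : (0:ℝ) < 2*M)).mp hle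
      linarith
    rw [div_mul_eq_mul_div, div_le_iff₀ (by positivity : (0:ℝ) < 8*M), one_mul]
    nlinarith [mul_nonneg (by linarith : (0:ℝ) ≤ G - 2*M) (by linarith : (0:ℝ) ≤ 3*M - G)]

/-- **Stability of the semi-dual objective (two-sided bound in `L²(P)`).** Under the stability
setup (Ω_P nonempty compact, Ω̃ compact convex ⊆ B̄(0, M) with Ω_P + B̄(0,1) ⊆ Ω̃; `f₀`, `f`
twice continuously differentiable on an open set containing Ω̃, with `‖∇f₀‖ ≤ M`,
`M⁻¹ ≼ D²f₀ ≼ M`, `‖∇f‖ ≤ 2M`, `(2M)⁻¹ ≼ D²f ≼ 2M` on Ω̃; `P` a probability measure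
supported in Ω_P and `Q = (∇f₀)_# P`), one has
`(1/(8M))·∫‖∇f − ∇f₀‖² dP ≤ S(f) − S(f₀) ≤ 2M·∫‖∇f − ∇f₀‖² dP`. -/
theorem semiDual_stability
    (d : ℕ) (hd : 1 ≤ d) (M : ℝ) (hM : 2 ≤ M)
    (ΩP Ωt : Set (EuclideanSpace ℝ (Fin d)))
    (hPne : ΩP.Nonempty) (hPcomp : IsCompact ΩP)
    (htcomp : IsCompact Ωt) (htconv : Convex ℝ Ωt)
    (htball : Ωt ⊆ Metric.closedBall 0 M)
    (hincl : ∀ x ∈ ΩP, ∀ u : EuclideanSpace ℝ (Fin d), ‖u‖ ≤ 1 → x + u ∈ Ωt)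
    (f₀ f : EuclideanSpace ℝ (Fin d) → ℝ)
    (hf₀smooth : ∃ V, IsOpen V ∧ Ωt ⊆ V ∧ ContDiffOn ℝ 2 f₀ V)
    (hfsmooth : ∃ V, IsOpen V ∧ Ωt ⊆ V ∧ ContDiffOn ℝ 2 f V)
    (hf₀grad : ∀ x ∈ Ωt, ‖gradient f₀ x‖ ≤ M)
    (hf₀hess : ∀ x ∈ Ωt, ∀ v : EuclideanSpace ℝ (Fin d),
      M⁻¹ * ‖v‖ ^ 2 ≤ ⟪fderiv ℝ (gradient f₀) x v, v⟫ ∧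
      ⟪fderiv ℝ (gradient f₀) x v, v⟫ ≤ M * ‖v‖ ^ 2)
    (hfgrad : ∀ x ∈ Ωt, ‖gradient f x‖ ≤ 2 * M)
    (hfhess : ∀ x ∈ Ωt, ∀ v : EuclideanSpace ℝ (Fin d),
      (2 * M)⁻¹ * ‖v‖ ^ 2 ≤ ⟪fderiv ℝ (gradient f) x v, v⟫ ∧
      ⟪fderiv ℝ (gradient f) x v, v⟫ ≤ 2 * M * ‖v‖ ^ 2)
    (P : Measure (EuclideanSpace ℝ (Fin d))) [IsProbabilityMeasure P]
    (hPsupp : P ΩPᶜ = 0) :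
    1 / (8 * M) * ∫ x, ‖gradient f x - gradient f₀ x‖ ^ 2 ∂P
      ≤ semiDual d Ωt P (P.map (gradient f₀)) f
        - semiDual d Ωt P (P.map (gradient f₀)) f₀ ∧
    semiDual d Ωt P (P.map (gradient f₀)) f
        - semiDual d Ωt P (P.map (gradient f₀)) f₀
      ≤ 2 * M * ∫ x, ‖gradient f x - gradient f₀ x‖ ^ 2 ∂P := by
  
  obtain ⟨V₀, hV₀o, hV₀s, hf₀V⟩ := hf₀smooth
  obtain ⟨V, hVo, hVs, hfV⟩ := hfsmooth
  have hM0 : (0:ℝ) < M := by linarith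
  have hPt : ΩP ⊆ Ωt := fun x hx => by simpa using hincl x hx 0 (by simp)
  have htne : Ωt.Nonempty := hPne.mono hPt
  have hf₀c : ContinuousOn f₀ Ωt := (hf₀V.continuousOn).mono hV₀s
  have hfc : ContinuousOn f Ωt := (hfV.continuousOn).mono hVs
  have hg₀c : ContinuousOn (gradient f₀) Ωt := fun w hw =>
    ((grad_contDiffAt hV₀o hf₀V (hV₀s hw)).continuousAt).continuousWithinAt
  have hgc : ContinuousOn (gradient f) Ωt := fun w hw =>
    ((grad_contDiffAt hVo hfV (hVs hw)).continuousAt).continuousWithinAt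
  have hae : ∀ᵐ x ∂P, x ∈ ΩP := by rw [ae_iff]; exact hPsupp
  have hres : P.restrict ΩP = P := Measure.restrict_eq_self_of_ae_mem hae
  have hint : ∀ h : EuclideanSpace ℝ (Fin d) → ℝ, ContinuousOn h ΩP → Integrable h P := by
    intro h hc; rw [← hres]; exact hc.integrableOn_compact hPcomp
  have hconjf : Continuous (conjOn d Ωt f) :=
    (conjOn_lipschitz hM0.le htball htne htcomp hfc).continuous
  have hconjf₀ : Continuous (conjOn d Ωt f₀) :=
    (conjOn_lipschitz hM0.le htball htne htcomp hf₀c).continuous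
  have hg₀meas : Measurable (gradient f₀) := gradient_measurable f₀
  have i1 : Integrable f P := hint f (hfc.mono hPt)
  have i2 : Integrable f₀ P := hint f₀ (hf₀c.mono hPt)
  have i3 : Integrable (fun x => conjOn d Ωt f (gradient f₀ x)) P :=
    hint _ (hconjf.comp_continuousOn (hg₀c.mono hPt))
  have i4 : Integrable (fun x => conjOn d Ωt f₀ (gradient f₀ x)) P :=
    hint _ (hconjf₀.comp_continuousOn (hg₀c.mono hPt))
  have iq : Integrable (fun x => ‖gradient f x - gradient f₀ x‖ ^ 2) P :=
    hint _ ((((hgc.mono hPt).sub (hg₀c.mono hPt)).norm).pow 2)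
  have key : ∀ g : EuclideanSpace ℝ (Fin d) → ℝ, Continuous (conjOn d Ωt g) →
      ∫ y, conjOn d Ωt g y ∂(P.map (gradient f₀)) = ∫ x, conjOn d Ωt g (gradient f₀ x) ∂P :=
    fun g hg => integral_map hg₀meas.aemeasurable hg.aestronglyMeasurable
  set Ex : EuclideanSpace ℝ (Fin d) → ℝ := fun x =>
    (f x - f₀ x) + (conjOn d Ωt f (gradient f₀ x) - conjOn d Ωt f₀ (gradient f₀ x)) with hExdef
  have j12 : Integrable (fun x => f x - f₀ x) P := i1.sub i2
  have j34 : Integrable (fun x => conjOn d Ωt f (gradient f₀ x)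
      - conjOn d Ωt f₀ (gradient f₀ x)) P := i3.sub i4
  have iE : Integrable Ex P := j12.add j34
  have hdiffS : semiDual d Ωt P (P.map (gradient f₀)) f
      - semiDual d Ωt P (P.map (gradient f₀)) f₀ = ∫ x, Ex x ∂P := by
    have e : semiDual d Ωt P (P.map (gradient f₀)) f
        - semiDual d Ωt P (P.map (gradient f₀)) f₀
        = (∫ x, f x ∂P - ∫ x, f₀ x ∂P)
          + (∫ x, conjOn d Ωt f (gradient f₀ x) ∂P
            - ∫ x, conjOn d Ωt f₀ (gradient f₀ x) ∂P) := by
      rw [semiDual, semiDual, key f hconjf, key f₀ hconjf₀]; ring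
    have h1 : ∫ x, Ex x ∂P = ∫ x, (f x - f₀ x) ∂P
        + ∫ x, (conjOn d Ωt f (gradient f₀ x) - conjOn d Ωt f₀ (gradient f₀ x)) ∂P :=
      integral_add j12 j34
    rw [e, h1, integral_sub i1 i2, integral_sub i3 i4]
  have hbnd : ∀ x ∈ ΩP, 1/(8*M) * ‖gradient f x - gradient f₀ x‖^2 ≤ Ex x ∧
      Ex x ≤ 2*M * ‖gradient f x - gradient f₀ x‖^2 := by
    intro x hx
    have hxt : x ∈ Ωt := hPt hx
    set y := gradient f₀ x with hy
    set g := gradient f x - y with hgdef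
    have hid : conjOn d Ωt f₀ y = ⟪x, y⟫ - f₀ x := by
      apply le_antisymm
      · apply conjOn_le htne
        intro z hz
        have ht := taylor_lower hV₀o hV₀s htconv hf₀V
          (fun w hw v => (hf₀hess w hw v).1) hxt hz
        have e1 : ⟪z - x, y⟫ = ⟪z, y⟫ - ⟪x, y⟫ := inner_sub_left z x y
        have e2 : ⟪gradient f₀ x, z - x⟫ = ⟪z - x, y⟫ := real_inner_comm _ _
        have e3 : (0:ℝ) ≤ M⁻¹ / 2 * ‖z - x‖ ^ 2 := by positivity
        rw [← hy] at ht
        linarith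
      · exact le_conjOn htcomp hf₀c hxt
    have hup : conjOn d Ωt f y ≤ ⟪x, y⟫ - f x + M * ‖g‖ ^ 2 := by
      apply conjOn_le htne
      intro z hz
      have ht := taylor_lower hVo hVs htconv hfV
        (fun w hw v => (hfhess w hw v).1) hxt hz
      have e1 : ⟪z - x, y⟫ = ⟪z, y⟫ - ⟪x, y⟫ := inner_sub_left z x y
      have e2 : ⟪z - x, y⟫ - ⟪gradient f x, z - x⟫ ≤ ‖g‖ * ‖z - x‖ := by
        have e2a : ⟪z - x, y⟫ - ⟪gradient f x, z - x⟫ = ⟪z - x, y - gradient f x⟫ := by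
          rw [real_inner_comm (z - x) (gradient f x), ← inner_sub_right]
        rw [e2a]
        calc ⟪z - x, y - gradient f x⟫ ≤ ‖z - x‖ * ‖y - gradient f x‖ :=
              real_inner_le_norm _ _
          _ = ‖g‖ * ‖z - x‖ := by rw [← norm_sub_rev (gradient f x) y, ← hgdef]; ring
      have amgm : ‖g‖ * ‖z - x‖ ≤ M * ‖g‖ ^ 2 + (2*M)⁻¹ / 2 * ‖z - x‖ ^ 2 := by
        have hrw : M * ‖g‖ ^ 2 + (2*M)⁻¹ / 2 * ‖z - x‖ ^ 2 - ‖g‖ * ‖z - x‖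
            = (2*M*‖g‖ - ‖z - x‖)^2 / (4*M) := by
          field_simp
          ring
        nlinarith [div_nonneg (sq_nonneg (2*M*‖g‖ - ‖z - x‖)) (by positivity : (0:ℝ) ≤ 4*M)]
      linarith
    have hlo : ⟪x, y⟫ - f x + 1/(8*M) * ‖g‖^2 ≤ conjOn d Ωt f y := by
      rcases eq_or_ne g 0 with hg0 | hg0
      · rw [hg0]
        simpa using le_conjOn htcomp hfc hxt
      · have hG0 : 0 < ‖g‖ := norm_pos_iff.mpr hg0
        set G := ‖g‖ with hGdef
        set t := min (G/(2*M)) 1 with htdef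
        have ht0 : 0 < t := lt_min (by positivity) one_pos
        have ht1 : t ≤ 1 := min_le_right _ _
        set w : EuclideanSpace ℝ (Fin d) := (-(t/G)) • g with hwdef
        have hwn : ‖w‖ = t := by
          rw [hwdef, norm_smul, Real.norm_eq_abs, abs_neg,
            abs_of_pos (div_pos ht0 hG0), ← hGdef, div_mul_cancel₀ _ hG0.ne']
        have hzt : x + w ∈ Ωt := hincl x hx w (by rw [hwn]; exact ht1)
        have hcj : ⟪x + w, y⟫ - f (x + w) ≤ conjOn d Ωt f y := le_conjOn htcomp hfc hzt
        have ht2 := taylor_upper hVo hVs htconv hfV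
          (fun u hu v => (hfhess u hu v).2) hxt hzt
        rw [add_sub_cancel_left] at ht2
        have e1 : ⟪x + w, y⟫ = ⟪x, y⟫ + ⟪w, y⟫ := inner_add_left x w y
        have e2 : ⟪w, y⟫ - ⟪gradient f x, w⟫ = t * G := by
          have e2a : ⟪w, y⟫ - ⟪gradient f x, w⟫ = ⟪w, y - gradient f x⟫ := by
            rw [real_inner_comm w (gradient f x), ← inner_sub_right]
          have e2b : y - gradient f x = -g := by rw [hgdef]; abel
          rw [e2a, e2b, hwdef, real_inner_smul_left, inner_neg_right,
            real_inner_self_eq_norm_sq, ← hGdef]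
          field_simp
        have hwsq : ‖w‖^2 = t^2 := by rw [hwn]
        have hG3 : G ≤ 3*M := by
          have h1 := hfgrad x hxt
          have h2 := hf₀grad x hxt
          have h3 : G ≤ ‖gradient f x‖ + ‖y‖ := by
            rw [hGdef, hgdef]; exact norm_sub_le _ _
          rw [← hy] at h2
          linarith
        have harith : 1/(8*M) * G^2 ≤ t*G - M * t^2 := by
          rw [htdef]; exact harith_aux M G hM hG0 hG3
        rw [hwsq] at ht2
        linarith [hcj, ht2, e1, e2, harith]
    have hEx : Ex x = f x - f₀ x + (conjOn d Ωt f y - conjOn d Ωt f₀ y) := by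
      simp only [hExdef, ← hy]
    constructor
    · rw [hEx, hid]; linarith
    · rw [hEx, hid]
      nlinarith [sq_nonneg ‖g‖, hM0]
  constructor
  · rw [hdiffS]
    calc 1 / (8 * M) * ∫ x, ‖gradient f x - gradient f₀ x‖ ^ 2 ∂P
        = ∫ x, 1/(8*M) * ‖gradient f x - gradient f₀ x‖ ^ 2 ∂P :=
          (integral_const_mul _ _).symm
      _ ≤ ∫ x, Ex x ∂P := integral_mono_ae (iq.const_mul _) iE
          (hae.mono fun x hx => (hbnd x hx).1)
  · rw [hdiffS]
    calc ∫ x, Ex x ∂P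
        ≤ ∫ x, 2*M * ‖gradient f x - gradient f₀ x‖ ^ 2 ∂P :=
          integral_mono_ae iE (iq.const_mul _) (hae.mono fun x hx => (hbnd x hx).2)
      _ = 2 * M * ∫ x, ‖gradient f x - gradient f₀ x‖ ^ 2 ∂P := integral_const_mul _ _
end

section
/- Under the stability setup, the conjugates f* and f₀* are differentiable on all of ℝ^d and the semi-dual suboptimality gap controls the squared L²(Q)-distance between their gradients: (1/(4M)) · ∫ ‖∇f*(y) − ∇f₀*(y)‖₂² dQ(y) ≤ S(f) − S(f₀). -/
open MeasureTheory Set RealInnerProductSpace InnerProductSpace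

section Aux
variable {E : Type*} [NormedAddCommGroup E] [InnerProductSpace ℝ E] [CompleteSpace E]
variable {g : E → ℝ} {V Ω : Set E} {α : ℝ}

lemma gradient_diffAt (hV : IsOpen V) (hg : ContDiffOn ℝ 2 g V) {x : E} (hx : x ∈ V) :
    DifferentiableAt ℝ (gradient g) x := by
  have h1 : ContDiffAt ℝ 1 (fderiv ℝ g) x :=
    (hg.contDiffAt (hV.mem_nhds hx)).fderiv_right (le_refl 2)
  exact (LinearIsometryEquiv.differentiableAt _).comp x (h1.differentiableAt one_ne_zero)

lemma fun_diffAt (hV : IsOpen V) (hg : ContDiffOn ℝ 2 g V) {x : E} (hx : x ∈ V) :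
    DifferentiableAt ℝ g x :=
  (hg.contDiffAt (hV.mem_nhds hx)).differentiableAt two_ne_zero

lemma inner_gradient (g : E → ℝ) (x u : E) : ⟪gradient g x, u⟫ = fderiv ℝ g x u :=
  toDual_symm_apply

lemma line_hasDerivAt (a u : E) (t : ℝ) : HasDerivAt (fun s : ℝ => a + s • u) u t := by
  simpa using ((hasDerivAt_id t).smul_const u).const_add a

/-- derivative of `t ↦ ⟪u, ∇g (a + t u)⟫`. -/
lemma gradLine_hasDerivAt (hV : IsOpen V) (hg : ContDiffOn ℝ 2 g V) (a u : E) {t : ℝ}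
    (ht : a + t • u ∈ V) :
    HasDerivAt (fun s : ℝ => ⟪u, gradient g (a + s • u)⟫)
      ⟪u, fderiv ℝ (gradient g) (a + t • u) u⟫ t := by
  have h1 : HasDerivAt (fun s : ℝ => gradient g (a + s • u))
      (fderiv ℝ (gradient g) (a + t • u) u) t := by
    have h := (gradient_diffAt hV hg ht).hasFDerivAt.comp_hasDerivAt t (line_hasDerivAt a u t)
    exact h
  simpa only [Function.comp_def, innerSL_apply_apply] using ((innerSL ℝ u).hasFDerivAt.comp_hasDerivAt t h1)

/-- derivative of `t ↦ g (a + t u)`. -/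
lemma funLine_hasDerivAt (hV : IsOpen V) (hg : ContDiffOn ℝ 2 g V) (a u : E) {t : ℝ}
    (ht : a + t • u ∈ V) :
    HasDerivAt (fun s : ℝ => g (a + s • u)) ⟪gradient g (a + t • u), u⟫ t := by
  rw [inner_gradient]
  exact (fun_diffAt hV hg ht).hasFDerivAt.comp_hasDerivAt t (line_hasDerivAt a u t)

lemma segment_mem (hconv : Convex ℝ Ω) {a b : E} (ha : a ∈ Ω) (hb : b ∈ Ω) {t : ℝ}
    (ht : t ∈ Icc (0:ℝ) 1) : a + t • (b - a) ∈ Ω :=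
  hconv.add_smul_sub_mem ha hb ht

/-- Strong monotonicity of the gradient from a Hessian lower bound. -/
lemma strongMono (hV : IsOpen V) (hg : ContDiffOn ℝ 2 g V) (hΩV : Ω ⊆ V) (hconv : Convex ℝ Ω)
    (hhess : ∀ x ∈ Ω, ∀ v : E, α * ‖v‖ ^ 2 ≤ ⟪fderiv ℝ (gradient g) x v, v⟫)
    {a b : E} (ha : a ∈ Ω) (hb : b ∈ Ω) :
    α * ‖b - a‖ ^ 2 ≤ ⟪gradient g b - gradient g a, b - a⟫ := by
  set u := b - a with hu
  have hmem : ∀ t ∈ Icc (0:ℝ) 1, a + t • u ∈ Ω := fun t ht => segment_mem hconv ha hb ht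
  set F : ℝ → ℝ := fun s => ⟪u, gradient g (a + s • u)⟫ with hF
  have hder : ∀ t ∈ Icc (0:ℝ) 1,
      HasDerivAt F ⟪u, fderiv ℝ (gradient g) (a + t • u) u⟫ t :=
    fun t ht => gradLine_hasDerivAt hV hg a u (hΩV (hmem t ht))
  have hcont : ContinuousOn F (Icc (0:ℝ) 1) :=
    fun t ht => ((hder t ht).continuousAt).continuousWithinAt
  obtain ⟨c, hc, hceq⟩ := exists_hasDerivAt_eq_slope F
    (fun t => ⟪u, fderiv ℝ (gradient g) (a + t • u) u⟫) (by norm_num : (0:ℝ) < 1)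
    hcont (fun t ht => hder t (Ioo_subset_Icc_self ht))
  have hcΩ : a + c • u ∈ Ω := hmem c (Ioo_subset_Icc_self hc)
  have hbd := hhess _ hcΩ u
  have h1 : F 1 - F 0 = ⟪u, fderiv ℝ (gradient g) (a + c • u) u⟫ := by
    rw [hceq]; ring
  have hF1 : F 1 = ⟪u, gradient g b⟫ := by simp [hF, hu]
  have hF0 : F 0 = ⟪u, gradient g a⟫ := by simp [hF]
  have : α * ‖u‖ ^ 2 ≤ F 1 - F 0 := by
    rw [h1, real_inner_comm]; exact hbd
  rw [hF1, hF0] at this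
  have hfin : ⟪u, gradient g b⟫ - ⟪u, gradient g a⟫ = ⟪gradient g b - gradient g a, u⟫ := by
    rw [real_inner_comm (gradient g b) u, real_inner_comm (gradient g a) u, inner_sub_left]
  linarith [hfin]

/-- First-order strong convexity lower bound. -/
lemma strongConvexLB (hV : IsOpen V) (hg : ContDiffOn ℝ 2 g V) (hΩV : Ω ⊆ V) (hconv : Convex ℝ Ω)
    (hhess : ∀ x ∈ Ω, ∀ v : E, α * ‖v‖ ^ 2 ≤ ⟪fderiv ℝ (gradient g) x v, v⟫)
    {a b : E} (ha : a ∈ Ω) (hb : b ∈ Ω) :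
    g a + ⟪gradient g a, b - a⟫ + (α / 2) * ‖b - a‖ ^ 2 ≤ g b := by
  set u := b - a with hu
  have hmem : ∀ t ∈ Icc (0:ℝ) 1, a + t • u ∈ Ω := fun t ht => segment_mem hconv ha hb ht
  set ψ : ℝ → ℝ := fun t => g (a + t • u) - t * ⟪gradient g a, u⟫ - α / 2 * t ^ 2 * ‖u‖ ^ 2
    with hψ
  have hder : ∀ t ∈ Icc (0:ℝ) 1, HasDerivAt ψ
      (⟪gradient g (a + t • u), u⟫ - ⟪gradient g a, u⟫ - α * t * ‖u‖ ^ 2) t := by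
    intro t ht
    have h1 := funLine_hasDerivAt hV hg a u (hΩV (hmem t ht))
    have h2 : HasDerivAt (fun t : ℝ => t * ⟪gradient g a, u⟫) ⟪gradient g a, u⟫ t := by
      simpa using (hasDerivAt_id t).mul_const ⟪gradient g a, u⟫
    have h3 : HasDerivAt (fun t : ℝ => α / 2 * t ^ 2 * ‖u‖ ^ 2) (α * t * ‖u‖ ^ 2) t := by
      have := ((hasDerivAt_pow 2 t).const_mul (α / 2)).mul_const (‖u‖ ^ 2)
      refine this.congr_deriv ?_
      ring
    exact (h1.sub h2).sub h3
  have hderiv_nonneg : ∀ t ∈ Ioo (0:ℝ) 1,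
      0 ≤ ⟪gradient g (a + t • u), u⟫ - ⟪gradient g a, u⟫ - α * t * ‖u‖ ^ 2 := by
    intro t ht
    have htΩ : a + t • u ∈ Ω := hmem t (Ioo_subset_Icc_self ht)
    have := strongMono hV hg hΩV hconv hhess ha htΩ
    have heq : a + t • u - a = t • u := by abel
    rw [heq] at this
    have ht0 : 0 < t := ht.1
    have hsmul : ⟪gradient g (a + t • u) - gradient g a, t • u⟫
        = t * ⟪gradient g (a + t • u) - gradient g a, u⟫ := real_inner_smul_right _ _ _
    rw [hsmul, norm_smul] at this
    have h2 : α * (t ^ 2 * ‖u‖ ^ 2) ≤ t * ⟪gradient g (a + t • u) - gradient g a, u⟫ := by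
      calc α * (t ^ 2 * ‖u‖ ^ 2) = α * (|t| * ‖u‖) ^ 2 := by
            rw [mul_pow, sq_abs]
        _ ≤ _ := by simpa using this
    have h3 : α * t * ‖u‖ ^ 2 ≤ ⟪gradient g (a + t • u) - gradient g a, u⟫ := by
      have := (mul_le_mul_iff_right₀ ht0).2 (le_of_eq (rfl : α * (t ^2 * ‖u‖^2) = α * (t^2 * ‖u‖^2)))
      nlinarith [h2]
    rw [inner_sub_left] at h3
    linarith
  have hcont : ContinuousOn ψ (Icc (0:ℝ) 1) :=
    fun t ht => ((hder t ht).continuousAt).continuousWithinAt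
  have hmono : MonotoneOn ψ (Icc (0:ℝ) 1) := by
    apply monotoneOn_of_deriv_nonneg (convex_Icc 0 1) hcont
    · intro t ht
      rw [interior_Icc] at ht
      exact ((hder t (Ioo_subset_Icc_self ht)).differentiableAt).differentiableWithinAt
    · intro t ht
      rw [interior_Icc] at ht
      rw [(hder t (Ioo_subset_Icc_self ht)).deriv]
      exact hderiv_nonneg t ht
  have h01 := hmono (left_mem_Icc.2 (by norm_num)) (right_mem_Icc.2 (by norm_num)) (by norm_num)
  have hψ0 : ψ 0 = g a := by simp [hψ]
  have hψ1 : ψ 1 = g b - ⟪gradient g a, u⟫ - α / 2 * ‖u‖ ^ 2 := by simp [hψ, hu]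
  rw [hψ0, hψ1] at h01
  linarith


/-- Variational inequality at a constrained maximizer. -/
lemma varIneq (hV : IsOpen V) (hg : ContDiffOn ℝ 2 g V) (hΩV : Ω ⊆ V) (hconv : Convex ℝ Ω)
    {y z : E} (hz : z ∈ Ω) (hmax : IsMaxOn (fun x => ⟪x, y⟫ - g x) Ω z)
    {w : E} (hw : w ∈ Ω) : ⟪y - gradient g z, w - z⟫ ≤ 0 := by
  have hFeq : (fun x : E => ⟪x, y⟫ - g x) = fun x => innerSL ℝ y x - g x := by
    funext x; rw [real_inner_comm]; rfl
  rw [hFeq] at hmax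
  have hFz : HasFDerivAt (fun x => innerSL ℝ y x - g x)
      ((innerSL ℝ y) - fderiv ℝ g z) z :=
    (innerSL ℝ y).hasFDerivAt.sub (fun_diffAt hV hg (hΩV hz)).hasFDerivAt
  have hloc : IsLocalMaxOn (fun x => innerSL ℝ y x - g x) Ω z :=
    hmax.filter_mono (Filter.le_principal_iff.2 self_mem_nhdsWithin)
  have hcone : w - z ∈ posTangentConeAt Ω z :=
    sub_mem_posTangentConeAt_of_segment_subset (hconv.segment_subset hz hw)
  have h := hloc.hasFDerivWithinAt_nonpos hFz.hasFDerivWithinAt hcone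
  have hcalc : ((innerSL ℝ y) - fderiv ℝ g z) (w - z) = ⟪y - gradient g z, w - z⟫ := by
    rw [inner_sub_left]
    simp only [ContinuousLinearMap.sub_apply, innerSL_apply_apply, inner_gradient]
  rwa [hcalc] at h

/-- Quantitative maximality from the variational inequality, under strong convexity. -/
lemma maxOfVI (hV : IsOpen V) (hg : ContDiffOn ℝ 2 g V) (hΩV : Ω ⊆ V) (hconv : Convex ℝ Ω)
    (hhess : ∀ x ∈ Ω, ∀ v : E, α * ‖v‖ ^ 2 ≤ ⟪fderiv ℝ (gradient g) x v, v⟫)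
    {y z : E} (hz : z ∈ Ω) (hvi : ∀ w ∈ Ω, ⟪y - gradient g z, w - z⟫ ≤ 0)
    {w : E} (hw : w ∈ Ω) :
    (⟪w, y⟫ - g w) + α / 2 * ‖w - z‖ ^ 2 ≤ ⟪z, y⟫ - g z := by
  have hsc := strongConvexLB hV hg hΩV hconv hhess hz hw
  have h1 := hvi w hw
  rw [inner_sub_left] at h1
  have h2 : ⟪w, y⟫ - ⟪z, y⟫ = ⟪y, w - z⟫ := by
    rw [real_inner_comm (w - z) y, inner_sub_left]
  linarith

lemma max_unique (hV : IsOpen V) (hg : ContDiffOn ℝ 2 g V) (hΩV : Ω ⊆ V) (hconv : Convex ℝ Ω)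
    (hα : 0 < α)
    (hhess : ∀ x ∈ Ω, ∀ v : E, α * ‖v‖ ^ 2 ≤ ⟪fderiv ℝ (gradient g) x v, v⟫)
    {y z₁ z₂ : E} (hz₁ : z₁ ∈ Ω) (hmax₁ : IsMaxOn (fun x => ⟪x, y⟫ - g x) Ω z₁)
    (hz₂ : z₂ ∈ Ω) (hmax₂ : IsMaxOn (fun x => ⟪x, y⟫ - g x) Ω z₂) : z₁ = z₂ := by
  have hvi := fun w hw => varIneq hV hg hΩV hconv hz₁ hmax₁ (w := w) hw
  have h := maxOfVI hV hg hΩV hconv hhess hz₁ hvi hz₂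
  have h2 : ⟪z₁, y⟫ - g z₁ ≤ ⟪z₂, y⟫ - g z₂ := hmax₂ hz₁
  have h3 : ‖z₂ - z₁‖ ^ 2 ≤ 0 := by nlinarith
  have h4 : ‖z₂ - z₁‖ = 0 := by nlinarith [norm_nonneg (z₂ - z₁)]
  have := norm_eq_zero.mp h4
  rw [sub_eq_zero] at this
  exact this.symm


noncomputable def conjAux (Ω : Set E) (g : E → ℝ) (y : E) : ℝ :=
  sSup ((fun x => ⟪x, y⟫ - g x) '' Ω)

lemma conjAux_eq_max {y z : E} (hz : z ∈ Ω)
    (hmax : IsMaxOn (fun x => ⟪x, y⟫ - g x) Ω z) :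
    conjAux Ω g y = ⟪z, y⟫ - g z := by
  apply IsGreatest.csSup_eq
  exact ⟨⟨z, hz, rfl⟩, fun b ⟨x, hx, hbx⟩ => hbx ▸ hmax hx⟩

lemma exists_max (hne : Ω.Nonempty) (hcomp : IsCompact Ω) (hgc : ContinuousOn g Ω) (y : E) :
    ∃ z ∈ Ω, IsMaxOn (fun x => ⟪x, y⟫ - g x) Ω z := by
  apply hcomp.exists_isMaxOn hne
  exact ((continuous_id.inner continuous_const).continuousOn).sub hgc

lemma argmax_lip (hV : IsOpen V) (hg : ContDiffOn ℝ 2 g V) (hΩV : Ω ⊆ V) (hconv : Convex ℝ Ω)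
    (hhess : ∀ x ∈ Ω, ∀ v : E, α * ‖v‖ ^ 2 ≤ ⟪fderiv ℝ (gradient g) x v, v⟫)
    {y₁ y₂ z₁ z₂ : E} (hz₁ : z₁ ∈ Ω) (hmax₁ : IsMaxOn (fun x => ⟪x, y₁⟫ - g x) Ω z₁)
    (hz₂ : z₂ ∈ Ω) (hmax₂ : IsMaxOn (fun x => ⟪x, y₂⟫ - g x) Ω z₂) :
    α * ‖z₂ - z₁‖ ^ 2 ≤ ⟪y₂ - y₁, z₂ - z₁⟫ := by
  have vi1 := varIneq hV hg hΩV hconv hz₁ hmax₁ hz₂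
  have vi2 := varIneq hV hg hΩV hconv hz₂ hmax₂ hz₁
  have hmono := strongMono hV hg hΩV hconv hhess hz₁ hz₂
  have hneg : z₁ - z₂ = -(z₂ - z₁) := by abel
  rw [hneg, inner_neg_right, inner_sub_left] at vi2
  rw [inner_sub_left] at vi1
  rw [inner_sub_left] at hmono ⊢
  linarith

lemma argmax_norm_le (hα : 0 < α) {y₁ y₂ z₁ z₂ : E}
    (h : α * ‖z₂ - z₁‖ ^ 2 ≤ ⟪y₂ - y₁, z₂ - z₁⟫) :
    ‖z₂ - z₁‖ ≤ α⁻¹ * ‖y₂ - y₁‖ := by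
  rcases eq_or_lt_of_le (norm_nonneg (z₂ - z₁)) with h0 | h0
  · rw [← h0]; positivity
  · have hle : ⟪y₂ - y₁, z₂ - z₁⟫ ≤ ‖y₂ - y₁‖ * ‖z₂ - z₁‖ := real_inner_le_norm _ _
    rw [inv_mul_eq_div, le_div_iff₀ hα]
    nlinarith

lemma conjAux_hasGradientAt (hV : IsOpen V) (hg : ContDiffOn ℝ 2 g V) (hΩV : Ω ⊆ V)
    (hconv : Convex ℝ Ω) (hα : 0 < α)
    (hhess : ∀ x ∈ Ω, ∀ v : E, α * ‖v‖ ^ 2 ≤ ⟪fderiv ℝ (gradient g) x v, v⟫)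
    (Z : E → E) (hZmem : ∀ y, Z y ∈ Ω)
    (hZmax : ∀ y, IsMaxOn (fun x => ⟪x, y⟫ - g x) Ω (Z y)) (y : E) :
    HasGradientAt (conjAux Ω g) (Z y) y := by
  have val : ∀ y' : E, conjAux Ω g y' = ⟪Z y', y'⟫ - g (Z y') :=
    fun y' => conjAux_eq_max (hZmem y') (hZmax y')
  have key : ∀ h : E, 0 ≤ conjAux Ω g (y + h) - conjAux Ω g y - ⟪Z y, h⟫ ∧
      conjAux Ω g (y + h) - conjAux Ω g y - ⟪Z y, h⟫ ≤ α⁻¹ * ‖h‖ ^ 2 := by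
    intro h
    have hub1 : ⟪Z y, y + h⟫ - g (Z y) ≤ conjAux Ω g (y + h) := by
      rw [val (y + h)]; exact hZmax (y + h) (hZmem y)
    have hub2 : ⟪Z (y + h), y⟫ - g (Z (y + h)) ≤ conjAux Ω g y := by
      rw [val y]; exact hZmax y (hZmem (y + h))
    have e1 : ⟪Z y, y + h⟫ = ⟪Z y, y⟫ + ⟪Z y, h⟫ := inner_add_right _ _ _
    have e2 : ⟪Z (y + h), y + h⟫ = ⟪Z (y + h), y⟫ + ⟪Z (y + h), h⟫ := inner_add_right _ _ _
    have hlow : 0 ≤ conjAux Ω g (y + h) - conjAux Ω g y - ⟪Z y, h⟫ := by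
      rw [val y]; linarith
    refine ⟨hlow, ?_⟩
    have hup : conjAux Ω g (y + h) - conjAux Ω g y - ⟪Z y, h⟫ ≤ ⟪Z (y + h) - Z y, h⟫ := by
      rw [val (y + h), inner_sub_left]; linarith
    have hlip := argmax_lip hV hg hΩV hconv hhess (hZmem y) (hZmax y)
      (hZmem (y + h)) (hZmax (y + h))
    have hyh : y + h - y = h := by abel
    rw [hyh] at hlip
    have hn : ‖Z (y + h) - Z y‖ ≤ α⁻¹ * ‖h‖ := by
      have h4 : α * ‖Z (y + h) - Z y‖ ^ 2 ≤ ⟪y + h - y, Z (y + h) - Z y⟫ := by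
        rwa [hyh]
      have := argmax_norm_le hα (y₁ := y) (y₂ := y + h) h4
      rwa [hyh] at this
    have hinner : ⟪Z (y + h) - Z y, h⟫ ≤ ‖Z (y + h) - Z y‖ * ‖h‖ := real_inner_le_norm _ _
    have : ‖Z (y + h) - Z y‖ * ‖h‖ ≤ α⁻¹ * ‖h‖ ^ 2 := by
      have := mul_le_mul_of_nonneg_right hn (norm_nonneg h)
      nlinarith [norm_nonneg h]
    linarith
  rw [hasGradientAt_iff_hasFDerivAt]
  rw [hasFDerivAt_iff_isLittleO_nhds_zero]
  rw [Asymptotics.isLittleO_iff]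
  intro c hc
  rw [Metric.eventually_nhds_iff]
  refine ⟨c * α, by positivity, fun {h} hh => ?_⟩
  rw [dist_zero_right] at hh
  have hZyh : (toDual ℝ E) (Z y) h = ⟪Z y, h⟫ := toDual_apply_apply
  obtain ⟨h1, h2⟩ := key h
  rw [hZyh]
  rw [Real.norm_eq_abs, abs_of_nonneg h1]
  have hfin : α⁻¹ * ‖h‖ ^ 2 ≤ c * ‖h‖ := by
    have h3 : α⁻¹ * ‖h‖ ^ 2 = (α⁻¹ * ‖h‖) * ‖h‖ := by ring
    rw [h3]
    apply mul_le_mul_of_nonneg_right _ (norm_nonneg h)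
    rw [inv_mul_le_iff₀ hα]
    nlinarith [norm_nonneg h]
  calc conjAux Ω g (y + h) - conjAux Ω g y - ⟪Z y, h⟫ ≤ α⁻¹ * ‖h‖ ^ 2 := h2
    _ ≤ c * ‖h‖ := hfin

end Aux


/-- **Stability of the semi-dual objective on the conjugate side.** Under the stability setup
(see below), the conjugates `f*` and `f₀*` are differentiable on all of `ℝ^d` and
`(1/(4M))·∫‖∇f* − ∇f₀*‖² dQ ≤ S(f) − S(f₀)` where `Q = (∇f₀)_# P`. -/
theorem semiDual_stability_conjugate
    (d : ℕ) (hd : 1 ≤ d) (M : ℝ) (hM : 2 ≤ M)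
    (ΩP Ωt : Set (EuclideanSpace ℝ (Fin d)))
    (hPne : ΩP.Nonempty) (hPcomp : IsCompact ΩP)
    (htcomp : IsCompact Ωt) (htconv : Convex ℝ Ωt)
    (htball : Ωt ⊆ Metric.closedBall 0 M)
    (hincl : ∀ x ∈ ΩP, ∀ u : EuclideanSpace ℝ (Fin d), ‖u‖ ≤ 1 → x + u ∈ Ωt)
    (f₀ f : EuclideanSpace ℝ (Fin d) → ℝ)
    (hf₀smooth : ∃ V, IsOpen V ∧ Ωt ⊆ V ∧ ContDiffOn ℝ 2 f₀ V)
    (hfsmooth : ∃ V, IsOpen V ∧ Ωt ⊆ V ∧ ContDiffOn ℝ 2 f V)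
    (hf₀grad : ∀ x ∈ Ωt, ‖gradient f₀ x‖ ≤ M)
    (hf₀hess : ∀ x ∈ Ωt, ∀ v : EuclideanSpace ℝ (Fin d),
      M⁻¹ * ‖v‖ ^ 2 ≤ ⟪fderiv ℝ (gradient f₀) x v, v⟫ ∧
      ⟪fderiv ℝ (gradient f₀) x v, v⟫ ≤ M * ‖v‖ ^ 2)
    (hfgrad : ∀ x ∈ Ωt, ‖gradient f x‖ ≤ 2 * M)
    (hfhess : ∀ x ∈ Ωt, ∀ v : EuclideanSpace ℝ (Fin d),
      (2 * M)⁻¹ * ‖v‖ ^ 2 ≤ ⟪fderiv ℝ (gradient f) x v, v⟫ ∧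
      ⟪fderiv ℝ (gradient f) x v, v⟫ ≤ 2 * M * ‖v‖ ^ 2)
    (P : Measure (EuclideanSpace ℝ (Fin d))) [IsProbabilityMeasure P]
    (hPsupp : P ΩPᶜ = 0) :
    (∀ y : EuclideanSpace ℝ (Fin d), DifferentiableAt ℝ (conjOn d Ωt f) y) ∧
    (∀ y : EuclideanSpace ℝ (Fin d), DifferentiableAt ℝ (conjOn d Ωt f₀) y) ∧
    1 / (4 * M) *
        ∫ y, ‖gradient (conjOn d Ωt f) y - gradient (conjOn d Ωt f₀) y‖ ^ 2
          ∂(P.map (gradient f₀))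
      ≤ semiDual d Ωt P (P.map (gradient f₀)) f
        - semiDual d Ωt P (P.map (gradient f₀)) f₀ := by
  obtain ⟨V, hVopen, htV, hfV⟩ := hfsmooth
  obtain ⟨V₀, hV₀open, htV₀, hfV₀⟩ := hf₀smooth
  have hM0 : (0:ℝ) < M := by linarith
  set α : ℝ := (2 * M)⁻¹ with hα_def
  set α₀ : ℝ := M⁻¹ with hα₀_def
  have hα : 0 < α := by positivity
  have hα₀ : 0 < α₀ := by positivity
  have hhf : ∀ x ∈ Ωt, ∀ v : EuclideanSpace ℝ (Fin d),
      α * ‖v‖ ^ 2 ≤ ⟪fderiv ℝ (gradient f) x v, v⟫ := fun x hx v => (hfhess x hx v).1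
  have hhf₀ : ∀ x ∈ Ωt, ∀ v : EuclideanSpace ℝ (Fin d),
      α₀ * ‖v‖ ^ 2 ≤ ⟪fderiv ℝ (gradient f₀) x v, v⟫ := fun x hx v => (hf₀hess x hx v).1
  have hPt : ΩP ⊆ Ωt := by
    intro x hx
    have := hincl x hx 0 (by simp)
    simpa using this
  have htne : Ωt.Nonempty := hPne.mono hPt
  -- argmax selections
  have hfc : ContinuousOn f Ωt := hfV.continuousOn.mono htV
  have hf₀c : ContinuousOn f₀ Ωt := hfV₀.continuousOn.mono htV₀
  choose Z hZmem hZmax using fun y => exists_max (Ω := Ωt) htne htcomp hfc y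
  choose Z₀ hZ₀mem hZ₀max using fun y => exists_max (Ω := Ωt) htne htcomp hf₀c y
  have hgradf : ∀ y, HasGradientAt (conjOn d Ωt f) (Z y) y := fun y =>
    conjAux_hasGradientAt hVopen hfV htV htconv hα hhf Z hZmem hZmax y
  have hgradf₀ : ∀ y, HasGradientAt (conjOn d Ωt f₀) (Z₀ y) y := fun y =>
    conjAux_hasGradientAt hV₀open hfV₀ htV₀ htconv hα₀ hhf₀ Z₀ hZ₀mem hZ₀max y
  have hdiff : ∀ y, DifferentiableAt ℝ (conjOn d Ωt f) y := fun y =>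
    (hgradf y).differentiableAt
  have hdiff₀ : ∀ y, DifferentiableAt ℝ (conjOn d Ωt f₀) y := fun y =>
    (hgradf₀ y).differentiableAt
  refine ⟨hdiff, hdiff₀, ?_⟩
  have hgeq : ∀ y, gradient (conjOn d Ωt f) y = Z y := fun y => (hgradf y).gradient
  have hgeq₀ : ∀ y, gradient (conjOn d Ωt f₀) y = Z₀ y := fun y => (hgradf₀ y).gradient
  -- fixed point property for f₀ on ΩP
  have hfix : ∀ x ∈ ΩP, Z₀ (gradient f₀ x) = x := by
    intro x hx
    have hxt : x ∈ Ωt := hPt hx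
    have hvi : ∀ w ∈ Ωt, ⟪gradient f₀ x - gradient f₀ x, w - x⟫ ≤ 0 := by
      intro w hw; simp
    have hmaxx : IsMaxOn (fun w => ⟪w, gradient f₀ x⟫ - f₀ w) Ωt x := by
      intro w hw
      have := maxOfVI hV₀open hfV₀ htV₀ htconv hhf₀ hxt hvi hw
      simp only [mem_setOf_eq]
      nlinarith [sq_nonneg ‖w - x‖, norm_nonneg (w - x)]
    exact max_unique hV₀open hfV₀ htV₀ htconv hα₀ hhf₀ (hZ₀mem _) (hZ₀max _) hxt hmaxx
  -- pointwise inequality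
  have hpt : ∀ x ∈ ΩP,
      1 / (4 * M) * ‖Z (gradient f₀ x) - Z₀ (gradient f₀ x)‖ ^ 2 ≤
        f x - f₀ x + (conjOn d Ωt f (gradient f₀ x) - conjOn d Ωt f₀ (gradient f₀ x)) := by
    intro x hx
    have hxt : x ∈ Ωt := hPt hx
    set y := gradient f₀ x with hy
    set z := Z y with hz_def
    have hzt : z ∈ Ωt := hZmem y
    have hvalf : conjOn d Ωt f y = ⟪z, y⟫ - f z := conjAux_eq_max hzt (hZmax y)
    have hvalf₀ : conjOn d Ωt f₀ y = ⟪x, y⟫ - f₀ x := by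
      have h1 : conjOn d Ωt f₀ y = ⟪Z₀ y, y⟫ - f₀ (Z₀ y) := conjAux_eq_max (hZ₀mem y) (hZ₀max y)
      rw [h1, hfix x hx]
    have hsc := strongConvexLB hVopen hfV htV htconv hhf hzt hxt
    have hvi := varIneq hVopen hfV htV htconv hzt (hZmax y) hxt
    rw [inner_sub_left] at hvi
    have hxz : ⟪x, y⟫ - ⟪z, y⟫ = ⟪y, x - z⟫ := by
      rw [real_inner_comm (x - z) y, inner_sub_left]
    have hZ₀x : Z₀ y = x := hfix x hx
    rw [hvalf, hvalf₀, hZ₀x]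
    have hnorm2 : ‖z - x‖ ^ 2 = ‖x - z‖ ^ 2 := by rw [norm_sub_rev]
    have hαval : α / 2 = 1 / (4 * M) := by
      rw [hα_def]; field_simp; ring
    have key : α / 2 * ‖x - z‖ ^ 2 = 1 / (4 * M) * ‖z - x‖ ^ 2 := by
      rw [hαval, hnorm2]
    linarith
  -- measure-theoretic setup
  have hPae : ∀ᵐ x ∂P, x ∈ ΩP := by
    rw [ae_iff]
    simpa [Set.compl_def] using hPsupp
  have hrestr : P.restrict ΩP = P := Measure.restrict_eq_self_of_ae_mem hPae
  have hΩPV₀ : ΩP ⊆ V₀ := hPt.trans htV₀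
  have hgrad₀cont : ContinuousOn (gradient f₀) V₀ := fun x hx =>
    (gradient_diffAt hV₀open hfV₀ hx).continuousAt.continuousWithinAt
  have hmap : AEMeasurable (gradient f₀) P := by
    rw [← hrestr]
    exact (hgrad₀cont.mono hΩPV₀).aemeasurable hPcomp.measurableSet
  have hφcont : Continuous (conjOn d Ωt f) := by
    have : Differentiable ℝ (conjOn d Ωt f) := fun y => hdiff y
    exact this.continuous
  have hφ₀cont : Continuous (conjOn d Ωt f₀) := by
    have : Differentiable ℝ (conjOn d Ωt f₀) := fun y => hdiff₀ y
    exact this.continuous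
  have hZlip : ∀ W : EuclideanSpace ℝ (Fin d) → EuclideanSpace ℝ (Fin d),
      (∀ y₁ y₂, ‖W y₂ - W y₁‖ ≤ α⁻¹ * ‖y₂ - y₁‖) → Continuous W := by
    intro W hW
    rw [Metric.continuous_iff]
    intro b ε hε
    refine ⟨α * ε / 2, by positivity, fun a ha => ?_⟩
    rw [dist_eq_norm] at ha ⊢
    have h1 := hW b a
    have h2 : α⁻¹ * ‖a - b‖ ≤ α⁻¹ * (α * ε / 2) := by
      apply mul_le_mul_of_nonneg_left (le_of_lt ha) (by positivity)
    have h3 : α⁻¹ * (α * ε / 2) = ε / 2 := by field_simp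
    calc ‖W a - W b‖ ≤ α⁻¹ * ‖a - b‖ := h1
      _ ≤ ε / 2 := by rw [← h3]; exact h2
      _ < ε := by linarith
  have hαα₀ : α ≤ α₀ := by
    rw [hα_def, hα₀_def]
    apply inv_anti₀ hM0
    linarith
  have hinvle : α₀⁻¹ ≤ α⁻¹ := inv_anti₀ hα hαα₀
  have hZc : Continuous Z := by
    apply hZlip
    intro y₁ y₂
    exact argmax_norm_le hα
      (argmax_lip hVopen hfV htV htconv hhf (hZmem y₁) (hZmax y₁) (hZmem y₂) (hZmax y₂))
  have hZ₀c : Continuous Z₀ := by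
    apply hZlip
    intro y₁ y₂
    have h2 := argmax_norm_le hα₀
      (argmax_lip hV₀open hfV₀ htV₀ htconv hhf₀ (hZ₀mem y₁) (hZ₀max y₁) (hZ₀mem y₂) (hZ₀max y₂))
    exact h2.trans (mul_le_mul_of_nonneg_right hinvle (norm_nonneg _))
  -- the squared-distance integrand
  set G : EuclideanSpace ℝ (Fin d) → ℝ := fun y => ‖Z y - Z₀ y‖ ^ 2 with hG_def
  have hGcont : Continuous G := by
    apply Continuous.pow
    exact (hZc.sub hZ₀c).norm
  have hGeq : (fun y => ‖gradient (conjOn d Ωt f) y - gradient (conjOn d Ωt f₀) y‖ ^ 2) = G := by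
    funext y
    rw [hgeq y, hgeq₀ y]
  -- integrability of the components
  have hInt : ∀ h : EuclideanSpace ℝ (Fin d) → ℝ, ContinuousOn h ΩP → Integrable h P := by
    intro h hc
    rw [← hrestr]
    exact hc.integrableOn_compact hPcomp
  have hΩPV : ΩP ⊆ V := hPt.trans htV
  have hIf : Integrable f P := hInt f (hfV.continuousOn.mono hΩPV)
  have hIf₀ : Integrable f₀ P := hInt f₀ (hfV₀.continuousOn.mono hΩPV₀)
  have hg₀P : ContinuousOn (gradient f₀) ΩP := hgrad₀cont.mono hΩPV₀
  have hIφ : Integrable (fun x => conjOn d Ωt f (gradient f₀ x)) P :=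
    hInt _ (hφcont.comp_continuousOn hg₀P)
  have hIφ₀ : Integrable (fun x => conjOn d Ωt f₀ (gradient f₀ x)) P :=
    hInt _ (hφ₀cont.comp_continuousOn hg₀P)
  have hIG : Integrable (fun x => G (gradient f₀ x)) P :=
    hInt _ (hGcont.comp_continuousOn hg₀P)
  -- rewrite integrals over the pushforward
  have hmapφ : ∫ y, conjOn d Ωt f y ∂(P.map (gradient f₀))
      = ∫ x, conjOn d Ωt f (gradient f₀ x) ∂P :=
    integral_map hmap hφcont.aestronglyMeasurable
  have hmapφ₀ : ∫ y, conjOn d Ωt f₀ y ∂(P.map (gradient f₀))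
      = ∫ x, conjOn d Ωt f₀ (gradient f₀ x) ∂P :=
    integral_map hmap hφ₀cont.aestronglyMeasurable
  have hmapG : ∫ y, G y ∂(P.map (gradient f₀)) = ∫ x, G (gradient f₀ x) ∂P :=
    integral_map hmap hGcont.aestronglyMeasurable
  rw [hGeq, hmapG]
  -- expand the semi-dual difference
  have hexp : semiDual d Ωt P (P.map (gradient f₀)) f - semiDual d Ωt P (P.map (gradient f₀)) f₀
      = ∫ x, (f x - f₀ x + (conjOn d Ωt f (gradient f₀ x) - conjOn d Ωt f₀ (gradient f₀ x))) ∂P := by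
    have e1 : ∫ x, (f x - f₀ x + (conjOn d Ωt f (gradient f₀ x)
          - conjOn d Ωt f₀ (gradient f₀ x))) ∂P
        = (∫ x, (f x - f₀ x) ∂P) + ∫ x, (conjOn d Ωt f (gradient f₀ x)
          - conjOn d Ωt f₀ (gradient f₀ x)) ∂P :=
      integral_add (hIf.sub hIf₀) (hIφ.sub hIφ₀)
    have e2 : ∫ x, (f x - f₀ x) ∂P = (∫ x, f x ∂P) - ∫ x, f₀ x ∂P := integral_sub hIf hIf₀
    have e3 : ∫ x, (conjOn d Ωt f (gradient f₀ x) - conjOn d Ωt f₀ (gradient f₀ x)) ∂P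
        = (∫ x, conjOn d Ωt f (gradient f₀ x) ∂P)
          - ∫ x, conjOn d Ωt f₀ (gradient f₀ x) ∂P := integral_sub hIφ hIφ₀
    rw [semiDual, semiDual, hmapφ, hmapφ₀, e1, e2, e3]
    ring
  rw [hexp]
  rw [← integral_const_mul]
  apply integral_mono_ae (hIG.const_mul _)
    ((hIf.sub hIf₀).add (hIφ.sub hIφ₀))
  filter_upwards [hPae] with x hx
  exact hpt x hx
end

section
/- Let μ > 0 and let φ : ℝ^d → ℝ be differentiable and μ-strongly convex (that is, x ↦ φ(x) − (μ/2)‖x‖₂² is convex), and suppose ∇φ(x) = x for every x ∉ (0,1)^d. Then the restriction of ∇φ to [0,1]^d is a bijection from [0,1]^d onto [0,1]^d. -/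
open MeasureTheory Set

section Aux

variable {E : Type*} [NormedAddCommGroup E] [InnerProductSpace ℝ E] [CompleteSpace E]

/-- Subgradient inequality for a `μ`-strongly convex differentiable function. -/
lemma strong_subgrad {φ : E → ℝ} {μ : ℝ} (hφ : Differentiable ℝ φ)
    (hconv : ConvexOn ℝ Set.univ (fun x => φ x - μ / 2 * ‖x‖ ^ 2)) (x y : E) :
    φ x + inner ℝ (gradient φ x) (y - x) + μ / 2 * ‖y - x‖ ^ 2 ≤ φ y := by
  set v : E := y - x with hv
  set L : ℝ → E := fun t => x + t • v with hL
  have hLd : ∀ t : ℝ, HasDerivAt L v t := by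
    intro t
    have h := (((hasDerivAt_id t).smul_const v).const_add x)
    rw [one_smul] at h; exact h
  set g : ℝ → ℝ := fun t => φ (L t) - μ / 2 * (inner ℝ (L t) (L t) : ℝ) with hg
  have hg' : ∀ t : ℝ, HasDerivAt g
      ((inner ℝ (gradient φ (L t)) v : ℝ)
        - μ / 2 * ((inner ℝ (L t) v : ℝ) + (inner ℝ v (L t) : ℝ))) t := by
    intro t
    have h1 : HasDerivAt (fun t => φ (L t)) (inner ℝ (gradient φ (L t)) v : ℝ) t := by
      have h := ((hφ (L t)).hasGradientAt.hasFDerivAt).comp_hasDerivAt t (hLd t)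
      rw [InnerProductSpace.toDual_apply_apply] at h; exact h
    exact h1.sub (((hLd t).inner ℝ (hLd t)).const_mul (μ / 2))
  have hgconv : ConvexOn ℝ Set.univ g := by
    have h := hconv.comp_affineMap (AffineMap.lineMap x y : ℝ →ᵃ[ℝ] E)
    have heq : g = (fun z => φ z - μ / 2 * ‖z‖ ^ 2) ∘ (AffineMap.lineMap x y : ℝ →ᵃ[ℝ] E) := by
      funext t
      simp only [g, L, Function.comp_apply, AffineMap.lineMap_apply, vsub_eq_sub, vadd_eq_add,
        real_inner_self_eq_norm_sq, hv]
      rw [add_comm (t • (y - x)) x]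
    rw [heq]
    simpa using h
  have hmem0 : (0 : ℝ) ∈ (Set.univ : Set ℝ) := trivial
  have hd := hgconv.deriv_le_slope hmem0 (Set.mem_univ 1) one_pos (hg' 0).differentiableAt
  rw [(hg' 0).deriv, slope_def_field] at hd
  have hL0 : L 0 = x := by simp [L]
  have hL1 : L 1 = y := by simp [L, hv]
  simp only [g] at hd
  rw [hL0, hL1] at hd
  norm_num at hd
  have hexp : (inner ℝ y y : ℝ) = inner ℝ x x + inner ℝ x v + inner ℝ v x + inner ℝ v v := by
    have hyv : y = x + v := by simp [hv]
    rw [hyv, inner_add_add_self]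
  have hcomm : (inner ℝ v x : ℝ) = inner ℝ x v := real_inner_comm x v
  have hnv : ‖v‖ ^ 2 = (inner ℝ v v : ℝ) := (real_inner_self_eq_norm_sq v).symm
  show φ x + (inner ℝ (gradient φ x) v : ℝ) + μ / 2 * ‖v‖ ^ 2 ≤ φ y
  rw [← real_inner_self_eq_norm_sq y, ← real_inner_self_eq_norm_sq x, hexp] at hd
  have hfd : (fderiv ℝ φ x) v = inner ℝ (gradient φ x) v := by
    rw [(hφ x).hasGradientAt.hasFDerivAt.fderiv, InnerProductSpace.toDual_apply_apply]
  rw [hnv]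
  linarith [hd, hcomm, hfd]

/-- Strong monotonicity of the gradient of a `μ`-strongly convex function. -/
lemma strong_mono {φ : E → ℝ} {μ : ℝ} (hφ : Differentiable ℝ φ)
    (hconv : ConvexOn ℝ Set.univ (fun x => φ x - μ / 2 * ‖x‖ ^ 2)) (x y : E) :
    μ * ‖y - x‖ ^ 2 ≤ inner ℝ (gradient φ y - gradient φ x) (y - x) := by
  have h1 := strong_subgrad hφ hconv x y
  have h2 := strong_subgrad hφ hconv y x
  have e1 : (inner ℝ (gradient φ y) (x - y) : ℝ) = - inner ℝ (gradient φ y) (y - x) := by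
    rw [show x - y = -(y - x) by abel, inner_neg_right]
  have e2 : ‖x - y‖ = ‖y - x‖ := norm_sub_rev x y
  have e3 : (inner ℝ (gradient φ y - gradient φ x) (y - x) : ℝ)
      = inner ℝ (gradient φ y) (y - x) - inner ℝ (gradient φ x) (y - x) := inner_sub_left _ _ _
  rw [e1, e2] at h2
  linarith

end Aux

/-- **Strongly convex potentials that are the identity gradient outside the open unit cube
push the unit cube onto itself.** If `φ : ℝ^d → ℝ` is differentiable and `μ`-strongly convex
(i.e. `x ↦ φ(x) − (μ/2)‖x‖²` is convex) and `∇φ(x) = x` for every `x ∉ (0,1)^d`, then the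
restriction of `∇φ` to `[0,1]^d` is a bijection from `[0,1]^d` onto `[0,1]^d`. -/
theorem gradient_bijOn_unitCube
    (d : ℕ) (μ : ℝ) (hμ : 0 < μ) (φ : EuclideanSpace ℝ (Fin d) → ℝ)
    (hφ : Differentiable ℝ φ)
    (hconv : ConvexOn ℝ Set.univ (fun x => φ x - μ / 2 * ‖x‖ ^ 2))
    (hout : ∀ x : EuclideanSpace ℝ (Fin d),
      x ∉ {z : EuclideanSpace ℝ (Fin d) | ∀ i, z i ∈ Set.Ioo (0 : ℝ) 1} → gradient φ x = x) :
    Set.BijOn (gradient φ)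
      {z : EuclideanSpace ℝ (Fin d) | ∀ i, z i ∈ Set.Icc (0 : ℝ) 1}
      {z : EuclideanSpace ℝ (Fin d) | ∀ i, z i ∈ Set.Icc (0 : ℝ) 1} := by
  set O : Set (EuclideanSpace ℝ (Fin d)) :=
    {z : EuclideanSpace ℝ (Fin d) | ∀ i, z i ∈ Set.Ioo (0 : ℝ) 1} with hO
  set C : Set (EuclideanSpace ℝ (Fin d)) :=
    {z : EuclideanSpace ℝ (Fin d) | ∀ i, z i ∈ Set.Icc (0 : ℝ) 1} with hC
  have smono := strong_mono hφ hconv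
  refine ⟨?_, ?_, ?_⟩
  · -- MapsTo
    intro x hx
    by_cases hxo : x ∈ O
    · intro i
      constructor
      · -- 0 ≤ (∇φ x) i : use y = x - x i • e_i
        set y : EuclideanSpace ℝ (Fin d) := x - (x i) • (EuclideanSpace.single i (1:ℝ)) with hy
        have hyi : y i = 0 := by
          simp [hy, EuclideanSpace.single_apply]
        have hyO : y ∉ O := by
          intro h
          have := (h i).1
          rw [hyi] at this; exact lt_irrefl _ this
        have hgy : gradient φ y = y := hout y hyO
        have hm := smono x y
        rw [hgy] at hm
        have hyx : y - x = (-(x i)) • (EuclideanSpace.single i (1:ℝ)) := by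
          simp [hy, neg_smul]
        have hnorm : ‖y - x‖ ^ 2 = (x i) ^ 2 := by
          rw [hyx, norm_smul, EuclideanSpace.norm_single]
          simp [mul_pow, sq_abs]
        have hinner : (inner ℝ (y - gradient φ x) (y - x) : ℝ)
            = (-(x i)) * ((y i) - (gradient φ x) i) := by
          rw [hyx, real_inner_smul_right, real_inner_comm, EuclideanSpace.inner_single_left]
          simp [PiLp.sub_apply]
        rw [hnorm, hinner, hyi] at hm
        have hxi : 0 < x i := (hxo i).1
        nlinarith [hm, hxi]
      · -- (∇φ x) i ≤ 1 : use y = x + (1 - x i) • e_i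
        set y : EuclideanSpace ℝ (Fin d) := x + (1 - x i) • (EuclideanSpace.single i (1:ℝ)) with hy
        have hyi : y i = 1 := by
          simp [hy, EuclideanSpace.single_apply]
        have hyO : y ∉ O := by
          intro h
          have := (h i).2
          rw [hyi] at this; exact lt_irrefl _ this
        have hgy : gradient φ y = y := hout y hyO
        have hm := smono x y
        rw [hgy] at hm
        have hyx : y - x = (1 - x i) • (EuclideanSpace.single i (1:ℝ)) := by
          simp [hy]
        have hnorm : ‖y - x‖ ^ 2 = (1 - x i) ^ 2 := by
          rw [hyx, norm_smul, EuclideanSpace.norm_single]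
          simp [mul_pow, sq_abs]
        have hinner : (inner ℝ (y - gradient φ x) (y - x) : ℝ)
            = (1 - x i) * ((y i) - (gradient φ x) i) := by
          rw [hyx, real_inner_smul_right, real_inner_comm, EuclideanSpace.inner_single_left]
          simp [PiLp.sub_apply]
        rw [hnorm, hinner, hyi] at hm
        have hxi : x i < 1 := (hxo i).2
        nlinarith [hm, hxi]
    · rw [hout x hxo]; exact hx
  · -- InjOn
    intro a ha b hb hab
    have hm := smono a b
    rw [hab, sub_self, inner_zero_left] at hm
    have h2 : ‖b - a‖ ^ 2 ≤ 0 := by nlinarith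
    have h3 : ‖b - a‖ ^ 2 = 0 := le_antisymm h2 (by positivity)
    have h4 : b - a = 0 := by
      rwa [pow_eq_zero_iff (two_ne_zero), norm_eq_zero] at h3
    have := sub_eq_zero.mp h4
    exact this.symm
  · -- SurjOn
    intro y hy
    by_cases hyo : y ∈ O
    · -- minimize ψ z = φ z - ⟪y, z⟫
      set ψ : EuclideanSpace ℝ (Fin d) → ℝ := fun z => φ z - inner ℝ y z with hψ
      have hψc : Continuous ψ :=
        hφ.continuous.sub (continuous_const.inner continuous_id)
      set c : ℝ := ‖gradient φ 0 - y‖ with hc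
      have hc0 : 0 ≤ c := norm_nonneg _
      set R : ℝ := 2 * c / μ + 1 with hR
      have hR0 : 0 < R := by positivity
      have hkey : ∀ z : EuclideanSpace ℝ (Fin d), R < ‖z‖ → ψ 0 < ψ z := by
        intro z hz
        rw [hR] at hz
        have h1 := strong_subgrad hφ hconv 0 z
        simp only [sub_zero] at h1
        have h2 : (inner ℝ (gradient φ 0) z : ℝ) - (inner ℝ y z : ℝ)
            = inner ℝ (gradient φ 0 - y) z := (inner_sub_left _ _ _).symm
        have h3 : -(c * ‖z‖) ≤ (inner ℝ (gradient φ 0 - y) z : ℝ) := by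
          have := abs_real_inner_le_norm (gradient φ 0 - y) z
          rw [← hc] at this
          have := neg_abs_le (inner ℝ (gradient φ 0 - y) z : ℝ)
          nlinarith [abs_real_inner_le_norm (gradient φ 0 - y) z]
        have hψ0 : ψ 0 = φ 0 := by simp [ψ]
        have hψz : ψ z = φ z - inner ℝ y z := rfl
        have hzpos : 0 < ‖z‖ := lt_trans hR0 hz
        have hgt : 0 < - (c * ‖z‖) + μ / 2 * ‖z‖ ^ 2 := by
          have : 2 * c / μ < ‖z‖ := by linarith
          have hmul : 2 * c < μ * ‖z‖ := by
            rw [div_lt_iff₀ hμ] at this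
            nlinarith
          nlinarith
        rw [hψ0, hψz]
        have : φ 0 + inner ℝ (gradient φ 0) z - inner ℝ y z
            = φ 0 + (inner ℝ (gradient φ 0 - y) z : ℝ) := by
          rw [inner_sub_left]; ring
        linarith [h1, h2, h3, hgt]
      obtain ⟨x₀, hx₀mem, hx₀min⟩ :=
        (isCompact_closedBall (0 : EuclideanSpace ℝ (Fin d)) R).exists_isMinOn
          ⟨0, by simp [Metric.mem_closedBall]; positivity⟩ hψc.continuousOn
      have hglob : ∀ z : EuclideanSpace ℝ (Fin d), ψ x₀ ≤ ψ z := by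
        intro z
        by_cases hz : z ∈ Metric.closedBall (0 : EuclideanSpace ℝ (Fin d)) R
        · exact hx₀min hz
        · have hzR : R < ‖z‖ := by
            simp only [Metric.mem_closedBall, dist_zero_right, not_le] at hz
            exact hz
          have h0mem : (0 : EuclideanSpace ℝ (Fin d)) ∈ Metric.closedBall (0 : EuclideanSpace ℝ (Fin d)) R := by
            simp [Metric.mem_closedBall]; positivity
          exact le_trans (hx₀min h0mem) (le_of_lt (hkey z hzR))
      have hloc : IsLocalMin ψ x₀ := Filter.Eventually.of_forall hglob
      have hψd : HasFDerivAt ψ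
          (InnerProductSpace.toDual ℝ (EuclideanSpace ℝ (Fin d)) (gradient φ x₀) - innerSL ℝ y) x₀ :=
        ((hφ x₀).hasGradientAt.hasFDerivAt).sub ((innerSL ℝ y).hasFDerivAt)
      have h0 := hloc.hasFDerivAt_eq_zero hψd
      have hgrad : gradient φ x₀ = y := by
        have happ := congrArg (fun f : EuclideanSpace ℝ (Fin d) →L[ℝ] ℝ => f (gradient φ x₀ - y)) h0
        simp only [ContinuousLinearMap.sub_apply, InnerProductSpace.toDual_apply_apply,
          innerSL_apply_apply, ContinuousLinearMap.zero_apply] at happ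
        have : (inner ℝ (gradient φ x₀ - y) (gradient φ x₀ - y) : ℝ) = 0 := by
          rw [inner_sub_left]; linarith [happ]
        have := inner_self_eq_zero.mp this
        exact sub_eq_zero.mp this
      have hx₀O : x₀ ∈ O := by
        by_contra h
        have := hout x₀ h
        rw [this] at hgrad
        rw [hgrad] at h
        exact h hyo
      exact ⟨x₀, fun i => Ioo_subset_Icc_self (hx₀O i), hgrad⟩
    · exact ⟨y, hy, hout y hyo⟩
end

section
/- Kullback–Leibler divergence of the pushforward of the uniform measure under a gradient map: let φ : ℝ^d → ℝ be twice continuously differentiable with D²φ(x) positive definite for every x ∈ ℝ^d, and suppose ∇φ(x) = x for every x ∉ (0,1)^d. Let P be the uniform probability measure on [0,1]^d and Q = (∇φ)_# P. Then Q is absolutely continuous with respect to P and KL(Q ‖ P) = −∫_{[0,1]^d} log det D²φ(x) dx. -/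
open MeasureTheory Set RealInnerProductSpace ENNReal

private lemma map_withDensity_comp_aux {α β : Type*} [MeasurableSpace α] [MeasurableSpace β]
    (ν : Measure α) {f : α → β} (hf : Measurable f) {ρ : β → ℝ≥0∞} (hρ : Measurable ρ) :
    Measure.map f (ν.withDensity (fun x => ρ (f x))) = (Measure.map f ν).withDensity ρ := by
  ext A hA
  rw [Measure.map_apply hf hA, withDensity_apply _ (hf hA), withDensity_apply _ hA,
    setLIntegral_map hA hρ hf]

set_option maxHeartbeats 2000000 in
/-- **Kullback–Leibler divergence of the pushforward of the uniform measure under a gradient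
map.** Let `φ : ℝ^d → ℝ` be twice continuously differentiable with positive definite Hessian
everywhere and `∇φ(x) = x` for `x ∉ (0,1)^d`. Let `P` be the uniform probability measure on
`[0,1]^d` (the restriction of Lebesgue measure to the unit cube) and `Q = (∇φ)_# P`. Then
`Q ≪ P` and `KL(Q‖P) = ∫ log(dQ/dP) dQ = −∫_{[0,1]^d} log det D²φ(x) dx`. -/
theorem kl_pushforward_gradient
    (d : ℕ) (φ : EuclideanSpace ℝ (Fin d) → ℝ) (hφ : ContDiff ℝ 2 φ)
    (hpos : ∀ x : EuclideanSpace ℝ (Fin d), ∀ v : EuclideanSpace ℝ (Fin d), v ≠ 0 →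
      0 < ⟪fderiv ℝ (gradient φ) x v, v⟫)
    (hout : ∀ x : EuclideanSpace ℝ (Fin d),
      x ∉ {z : EuclideanSpace ℝ (Fin d) | ∀ i, z i ∈ Set.Ioo (0 : ℝ) 1} →
      gradient φ x = x) :
    (((volume : Measure (EuclideanSpace ℝ (Fin d))).restrict
        {z | ∀ i, z i ∈ Set.Icc (0 : ℝ) 1}).map (gradient φ)) ≪
      ((volume : Measure (EuclideanSpace ℝ (Fin d))).restrict
        {z | ∀ i, z i ∈ Set.Icc (0 : ℝ) 1}) ∧
    (∫ y, Real.log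
        ((((((volume : Measure (EuclideanSpace ℝ (Fin d))).restrict
              {z | ∀ i, z i ∈ Set.Icc (0 : ℝ) 1}).map (gradient φ)).rnDeriv
            ((volume : Measure (EuclideanSpace ℝ (Fin d))).restrict
              {z | ∀ i, z i ∈ Set.Icc (0 : ℝ) 1})) y).toReal)
        ∂(((volume : Measure (EuclideanSpace ℝ (Fin d))).restrict
            {z | ∀ i, z i ∈ Set.Icc (0 : ℝ) 1}).map (gradient φ)))
      = - ∫ x in {z : EuclideanSpace ℝ (Fin d) | ∀ i, z i ∈ Set.Icc (0 : ℝ) 1},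
            Real.log ((fderiv ℝ (gradient φ) x).det) ∂volume := by
  classical
  set g : EuclideanSpace ℝ (Fin d) → EuclideanSpace ℝ (Fin d) := gradient φ with hg_def
  set K : Set (EuclideanSpace ℝ (Fin d)) := {z | ∀ i, z i ∈ Set.Icc (0 : ℝ) 1} with hK_def
  set U : Set (EuclideanSpace ℝ (Fin d)) := {z | ∀ i, z i ∈ Set.Ioo (0 : ℝ) 1} with hU_def
  set μ : Measure (EuclideanSpace ℝ (Fin d)) := volume with hμ_def
  set P : Measure (EuclideanSpace ℝ (Fin d)) := μ.restrict K with hP_def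
  -- smoothness of the gradient map
  have hgC1 : ContDiff ℝ 1 g := by
    have h1 : ContDiff ℝ 1 (fderiv ℝ φ) := hφ.fderiv_right (by norm_num)
    exact (InnerProductSpace.toDual ℝ (EuclideanSpace ℝ (Fin d))).symm.contDiff.comp h1
  have hgc : Continuous g := hgC1.continuous
  have hgm : Measurable g := hgc.measurable
  have hder : ∀ x, HasFDerivAt g (fderiv ℝ g x) x := fun x =>
    (hgC1.differentiable one_ne_zero x).hasFDerivAt
  -- the derivative is injective everywhere
  have hAinj : ∀ x, Function.Injective (fderiv ℝ g x) := by
    intro x a b hab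
    by_contra hne
    have hv : a - b ≠ 0 := sub_ne_zero.mpr hne
    have h := hpos x (a - b) hv
    rw [map_sub, hab, sub_self] at h
    simp at h
  -- positive determinant
  have hdet : ∀ x, 0 < (fderiv ℝ g x).det := by
    intro x
    set A := fderiv ℝ g x with hA_def
    have hA : ∀ v, v ≠ 0 → 0 < ⟪A v, v⟫ := fun v hv => hpos x v hv
    set F : ℝ → ℝ :=
      fun t => ((1 - t) • ContinuousLinearMap.id ℝ (EuclideanSpace ℝ (Fin d)) + t • A).det
      with hF
    have hFcont : Continuous F := by
      apply ContinuousLinearMap.continuous_det.comp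
      exact ((continuous_const.sub continuous_id).smul continuous_const).add
        (continuous_id.smul continuous_const)
    have hne : ∀ t ∈ Icc (0:ℝ) 1, F t ≠ 0 := by
      intro t ht hdet0
      obtain ⟨v, hv_mem, hv_ne⟩ :=
        SetLike.exists_of_lt (LinearMap.bot_lt_ker_of_det_eq_zero hdet0)
      simp only [Submodule.mem_bot] at hv_ne
      have hBv : ((1 - t) • ContinuousLinearMap.id ℝ (EuclideanSpace ℝ (Fin d)) + t • A) v = 0 :=
        hv_mem
      have hinner :
          ⟪((1 - t) • ContinuousLinearMap.id ℝ (EuclideanSpace ℝ (Fin d)) + t • A) v, v⟫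
            = (1 - t) * ⟪v, v⟫ + t * ⟪A v, v⟫ := by
        simp [ContinuousLinearMap.add_apply, ContinuousLinearMap.smul_apply,
          inner_add_left, real_inner_smul_left, Finset.mul_sum, mul_assoc]
      rw [hBv, inner_zero_left] at hinner
      have hpos' : (0:ℝ) < (1 - t) * ⟪v, v⟫ + t * ⟪A v, v⟫ := by
        rcases eq_or_lt_of_le ht.1 with h0 | h0
        · simp only [← h0, sub_zero, one_mul, zero_mul, add_zero]
          have hn : 0 < ‖v‖ := norm_pos_iff.mpr hv_ne
          rw [real_inner_self_eq_norm_mul_norm]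
          exact mul_pos hn hn
        · have h1 : 0 < t * ⟪A v, v⟫ := mul_pos h0 (hA v hv_ne)
          have h2 : 0 ≤ (1 - t) * ⟪v, v⟫ :=
            mul_nonneg (by linarith [ht.2]) (real_inner_self_nonneg)
          linarith
      rw [← hinner] at hpos'
      exact lt_irrefl 0 hpos'
    have hF0 : F 0 = 1 := by
      simp [hF, ContinuousLinearMap.det]
    have hF1 : F 1 = A.det := by
      show ((1 - (1:ℝ)) • ContinuousLinearMap.id ℝ (EuclideanSpace ℝ (Fin d))
        + (1:ℝ) • A).det = A.det
      rw [sub_self]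
      congr 1
      ext v
      simp
    by_contra hle
    push_neg at hle
    have hlt : A.det < 0 := lt_of_le_of_ne hle (by rw [← hF1]; exact hne 1 ⟨zero_le_one, le_rfl⟩)
    have h0mem : (0:ℝ) ∈ Icc (F 1) (F 0) := by
      rw [hF0, hF1]; exact ⟨hlt.le, zero_le_one⟩
    obtain ⟨t, ht, hFt⟩ := intermediate_value_Icc' zero_le_one hFcont.continuousOn h0mem
    exact hne t ht hFt
  -- strict derivative and open map
  have hstrict : ∀ x, HasStrictFDerivAt g (fderiv ℝ g x) x := fun x =>
    hgC1.contDiffAt.hasStrictFDerivAt one_ne_zero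
  have hopen : IsOpenMap g := by
    have hbij : ∀ x, Function.Bijective (fderiv ℝ g x) := fun x =>
      ⟨hAinj x, LinearMap.injective_iff_surjective.mp (hAinj x)⟩
    let Aeq : EuclideanSpace ℝ (Fin d) →
        EuclideanSpace ℝ (Fin d) ≃L[ℝ] EuclideanSpace ℝ (Fin d) :=
      fun x => LinearEquiv.toContinuousLinearEquiv
        (LinearEquiv.ofBijective ((fderiv ℝ g x : _ →L[ℝ] _) : _ →ₗ[ℝ] _) (hbij x))
    have hco : ∀ x, ((Aeq x : _ ≃L[ℝ] _) : _ →L[ℝ] _) = fderiv ℝ g x := fun x =>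
      ContinuousLinearMap.ext fun v => rfl
    exact isOpenMap_of_hasStrictFDerivAt_equiv (f' := Aeq) (fun x => (hco x) ▸ hstrict x)
  -- global injectivity
  have hinj : Function.Injective g := by
    intro a b hab
    by_contra hne
    have hu0 : a - b ≠ 0 := sub_ne_zero.mpr hne
    set u := a - b with hu_def
    set h : ℝ → ℝ := fun t => ⟪u, g (b + t • u)⟫ with hh
    have hd : ∀ t, HasDerivAt h ⟪u, (fderiv ℝ g (b + t • u)) u⟫ t := by
      intro t
      have hc : HasDerivAt (fun t : ℝ => b + t • u) u t := by
        simpa using ((hasDerivAt_id t).smul_const u).const_add b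
      have h2 : HasDerivAt (fun t => g (b + t • u)) ((fderiv ℝ g (b + t • u)) u) t :=
        (hder _).comp_hasDerivAt t hc
      have h3 := (innerSL ℝ u).hasFDerivAt.comp_hasDerivAt t h2
      simp at h3
      exact h3
    have hmono : StrictMono h := strictMono_of_deriv_pos (fun t => by
      rw [(hd t).deriv]
      have := hpos (b + t • u) u hu0
      rwa [real_inner_comm] at this)
    have h01 : h 0 < h 1 := hmono zero_lt_one
    have e0 : h 0 = ⟪u, g b⟫ := by simp [hh]
    have e1 : h 1 = ⟪u, g a⟫ := by
      have : b + u = a := by rw [hu_def]; abel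
      simp [hh, this]
    rw [e0, e1, hab] at h01
    exact lt_irrefl _ h01
  -- topology of the cube
  have hUopen : IsOpen U := by
    have hrw : U = ⋂ i, (fun z : EuclideanSpace ℝ (Fin d) => z i) ⁻¹' (Set.Ioo 0 1) := by
      ext z; simp [hU_def, Set.mem_iInter]
    rw [hrw]
    exact isOpen_iInter_of_finite fun i =>
      (isOpen_Ioo).preimage (EuclideanSpace.proj i).continuous
  have hKclosed : IsClosed K := by
    have hrw : K = ⋂ i, (fun z : EuclideanSpace ℝ (Fin d) => z i) ⁻¹' (Set.Icc 0 1) := by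
      ext z; simp [hK_def, Set.mem_iInter]
    rw [hrw]
    exact isClosed_iInter fun i => (isClosed_Icc).preimage (EuclideanSpace.proj i).continuous
  have hKcompact : IsCompact K := by
    apply Metric.isCompact_of_isClosed_isBounded hKclosed
    rw [Metric.isBounded_iff_subset_closedBall 0]
    refine ⟨Real.sqrt d, fun z hz => ?_⟩
    rw [Metric.mem_closedBall, dist_zero_right, EuclideanSpace.norm_eq]
    apply Real.sqrt_le_sqrt
    calc ∑ i, ‖z i‖ ^ 2 ≤ ∑ _i : Fin d, (1:ℝ) := by
          apply Finset.sum_le_sum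
          intro i _
          have h1 : |z i| ≤ 1 := abs_le.mpr ⟨by linarith [(hz i).1], (hz i).2⟩
          calc ‖z i‖ ^ 2 = |z i| ^ 2 := by rw [Real.norm_eq_abs]
            _ ≤ 1 ^ 2 := by apply pow_le_pow_left₀ (abs_nonneg _) h1
            _ = 1 := one_pow 2
      _ = (d : ℝ) := by simp
  have hKmeas : MeasurableSet K := hKclosed.measurableSet
  have hUK : U ⊆ K := fun z hz i => ⟨(hz i).1.le, (hz i).2.le⟩
  -- images of the cube
  have hsub : g '' U ⊆ U := by
    rintro y ⟨x, hx, rfl⟩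
    by_contra hgy
    have h1 : g (g x) = g x := hout _ hgy
    have h2 : g x = x := hinj h1
    rw [h2] at hgy
    exact hgy hx
  have hKU : g '' K ∩ U = g '' U := by
    apply Subset.antisymm
    · rintro y ⟨⟨x, hxK, rfl⟩, hyU⟩
      by_cases hxU : x ∈ U
      · exact ⟨x, hxU, rfl⟩
      · rw [hout x hxU] at hyU
        exact absurd hyU hxU
    · exact fun y hy => ⟨image_mono hUK hy, hsub hy⟩
  have hUne : U.Nonempty := by
    refine ⟨WithLp.toLp 2 (fun _ => (1:ℝ)/2), fun i => ?_⟩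
    constructor <;> norm_num
  have hUconv : Convex ℝ U := by
    intro z hz w hw a b ha hb hab i
    have h := (convex_Ioo (0:ℝ) 1) (hz i) (hw i) ha hb hab
    simpa using h
  have hUconn : IsPreconnected U := hUconv.isPreconnected
  have hUsub : U ⊆ g '' U := by
    by_contra hns
    rw [not_subset] at hns
    obtain ⟨y, hyU, hygU⟩ := hns
    have hKcl : IsClosed (g '' K) := (hKcompact.image hgc).isClosed
    have hcover : U ⊆ g '' U ∪ (g '' K)ᶜ := by
      intro z hz
      by_cases hzK : z ∈ g '' K
      · exact Or.inl (hKU ▸ ⟨hzK, hz⟩)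
      · exact Or.inr hzK
    have h1 : (U ∩ g '' U).Nonempty := by
      obtain ⟨p, hp⟩ := hUne
      exact ⟨g p, hsub ⟨p, hp, rfl⟩, ⟨p, hp, rfl⟩⟩
    have h2 : (U ∩ (g '' K)ᶜ).Nonempty :=
      ⟨y, hyU, fun hyK => hygU (hKU ▸ ⟨hyK, hyU⟩)⟩
    have := hUconn (g '' U) ((g '' K)ᶜ) (hopen U hUopen) hKcl.isOpen_compl hcover h1 h2
    obtain ⟨q, _, hq1, hq2⟩ := this
    exact hq2 (image_mono hUK hq1)
  have hgU : g '' U = U := Subset.antisymm hsub hUsub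
  have hgK : g '' K = K := by
    apply Subset.antisymm
    · rintro y ⟨x, hxK, rfl⟩
      by_cases hxU : x ∈ U
      · exact hUK (hsub ⟨x, hxU, rfl⟩)
      · rw [hout x hxU]; exact hxK
    · intro y hyK
      by_cases hyU : y ∈ U
      · obtain ⟨x, hxU, hx⟩ := hgU ▸ hyU
        exact ⟨x, hUK hxU, hx⟩
      · exact ⟨y, hyK, hout y hyU⟩
  have hsurj : Function.Surjective g := by
    intro y
    by_cases hyU : y ∈ U
    · obtain ⟨x, _, hx⟩ := hgU ▸ hyU
      exact ⟨x, hx⟩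
    · exact ⟨y, hout y hyU⟩
  -- global homeomorphism
  let e : EuclideanSpace ℝ (Fin d) ≃ₜ EuclideanSpace ℝ (Fin d) :=
    Equiv.toHomeomorphOfContinuousOpen (Equiv.ofBijective g ⟨hinj, hsurj⟩) hgc hopen
  have heinv : ∀ x, e.symm (g x) = x := fun x => e.symm_apply_apply x
  -- densities
  set δ : EuclideanSpace ℝ (Fin d) → ℝ := fun x => (fderiv ℝ g x).det with hδ_def
  have hδc : Continuous δ := by
    have h1 : ContDiff ℝ 0 (fderiv ℝ g) := hgC1.fderiv_right (by norm_num)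
    exact ContinuousLinearMap.continuous_det.comp h1.continuous
  set w : EuclideanSpace ℝ (Fin d) → ℝ≥0∞ := fun x => ENNReal.ofReal (δ x) with hw_def
  have hwm : Measurable w := ENNReal.measurable_ofReal.comp hδc.measurable
  have hw0 : ∀ x, w x ≠ 0 := fun x => (ENNReal.ofReal_pos.mpr (hdet x)).ne'
  have hwtop : ∀ x, w x ≠ ∞ := fun x => ENNReal.ofReal_ne_top
  set ρ : EuclideanSpace ℝ (Fin d) → ℝ≥0∞ := fun y => (w (e.symm y))⁻¹ with hρ_def
  have hρm : Measurable ρ := (hwm.comp e.symm.continuous.measurable).inv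
  -- change of variables
  have hmap : Measure.map g (P.withDensity w) = P := by
    have h := map_withDensity_abs_det_fderiv_eq_addHaar μ hKmeas.nullMeasurableSet
      (fun x _ => (hder x).hasFDerivWithinAt) (hinj.injOn)
    rw [hgK] at h
    have hwabs : (fun x => ENNReal.ofReal |(fderiv ℝ g x).det|) = w := by
      funext x
      rw [hw_def, abs_of_pos (hdet x)]
    rw [hwabs] at h
    exact h
  -- the pushforward has density ρ
  have hP1 : (P.withDensity w).withDensity (fun x => ρ (g x)) = P := by
    have h1 : (fun x => ρ (g x)) = fun x => (w x)⁻¹ := by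
      funext x; rw [hρ_def]; simp only [heinv x]
    rw [h1, ← withDensity_mul (g := fun x => (w x)⁻¹) _ hwm hwm.inv]
    have h2 : (w * fun x => (w x)⁻¹) = 1 := by
      funext x
      simp only [Pi.mul_apply, Pi.one_apply]
      exact ENNReal.mul_inv_cancel (hw0 x) (hwtop x)
    rw [h2, withDensity_one]
  have hQ : Measure.map g P = P.withDensity ρ := by
    conv_lhs => rw [← hP1]
    rw [map_withDensity_comp_aux _ hgm hρm, hmap]
  have hfin : IsFiniteMeasure P := ⟨by
    rw [hP_def, Measure.restrict_apply_univ]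
    exact hKcompact.measure_lt_top⟩
  have hac : Measure.map g P ≪ P := by rw [hQ]; exact withDensity_absolutelyContinuous _ _
  refine ⟨hac, ?_⟩
  have hrn : (Measure.map g P).rnDeriv P =ᵐ[P] ρ := by
    rw [hQ]; exact Measure.rnDeriv_withDensity P hρm
  have hrnQ : (Measure.map g P).rnDeriv P =ᵐ[Measure.map g P] ρ := hac.ae_le hrn
  calc ∫ y, Real.log (((Measure.map g P).rnDeriv P y).toReal) ∂(Measure.map g P)
      = ∫ y, Real.log ((ρ y).toReal) ∂(Measure.map g P) :=
        integral_congr_ae (hrnQ.mono fun y hy => by simp only [hy])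
    _ = ∫ x, Real.log ((ρ (g x)).toReal) ∂P := by
        apply integral_map hgm.aemeasurable
        exact (Real.measurable_log.comp
          (ENNReal.measurable_toReal.comp hρm)).aestronglyMeasurable
    _ = ∫ x, -Real.log (δ x) ∂P := by
        apply integral_congr_ae
        apply Filter.Eventually.of_forall
        intro x
        have h1 : ρ (g x) = (w x)⁻¹ := by rw [hρ_def]; simp only [heinv x]
        show Real.log ((ρ (g x)).toReal) = -Real.log (δ x)
        simp only [h1, ENNReal.toReal_inv, hw_def, ENNReal.toReal_ofReal (hdet x).le,
          Real.log_inv]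
        exact congrArg (fun r => -Real.log r) (ENNReal.toReal_ofReal (hdet x).le)
    _ = - ∫ x in K, Real.log (δ x) ∂μ := by rw [integral_neg]
end
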